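/- arXiv:2206.14613 — 11 statements merged into one kernel-verified Lean document; each statement's English description precedes it below -/
import Mathlib

section
/- Let q = p^m with p an odd prime, and let b ∈ F_{q^2}^*. The equation x^2 + b·x + 1/b^(q-1) = 0 has two distinct solutions in the unit circle U_{q+1} = {x ∈ F_{q^2} : x^(q+1) = 1} if and only if θ = (b^(q+1) - 4)/b^(q+1) is a nonsquare in F_q^*. -/
/-- Let `q = p^m` with `p` an odd prime, `K` the field with `q^2` elements, and
`b ∈ K^*`. The equation `x^2 + b·x + 1/b^(q-1) = 0` has two distinct solutions in the
unit circle `U_{q+1} = {x : x^(q+1) = 1}` if and only if `θ = (b^(q+1) - 4)/b^(q+1)`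
is a nonsquare in `F_q^*`, i.e. `θ^((q-1)/2) = -1`. -/
theorem stmt_1 (p m q : ℕ) (hp : p.Prime) (hodd : Odd p) (hm : 0 < m) (hq : q = p ^ m)
    (K : Type*) [Field K] [Fintype K] (hcard : Fintype.card K = q ^ 2)
    (b : K) (hb : b ≠ 0) :
    (∃ x y : K, x ≠ y ∧ x ^ (q + 1) = 1 ∧ y ^ (q + 1) = 1 ∧
        x ^ 2 + b * x + 1 / b ^ (q - 1) = 0 ∧ y ^ 2 + b * y + 1 / b ^ (q - 1) = 0) ↔
      ((b ^ (q + 1) - 4) / b ^ (q + 1)) ^ ((q - 1) / 2) = -1 := by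
  -- basic numeric facts
  have hp2 : p ≠ 2 := by rintro rfl; exact (by norm_num : ¬ Odd 2) hodd
  have hp3 : 3 ≤ p := by have := hp.two_le; omega
  have hq3 : 3 ≤ q := by
    rw [hq]; exact le_trans hp3 (Nat.le_self_pow hm.ne' p)
  have hqodd : Odd q := hq ▸ hodd.pow
  have hk2 : 2 * ((q - 1) / 2) = q - 1 := by
    obtain ⟨t, ht⟩ := hqodd; omega
  set k := (q - 1) / 2 with hk
  have hkpos : 0 < k := by omega
  -- characteristic
  have hchar : CharP K p := by
    have h := ringChar.charP K
    obtain ⟨n, hn⟩ := FiniteField.card K (ringChar K)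
    have hprime : (ringChar K).Prime := CharP.char_is_prime K _
    have : ringChar K = p := by
      have hd : ringChar K ∣ p ^ (m * 2) := by
        have hcard' : Fintype.card K = p ^ (m * 2) := by rw [hcard, hq, ← pow_mul]
        rw [← hcard', hn.2]
        exact dvd_pow_self _ n.2.ne'
      exact ((Nat.prime_dvd_prime_iff_eq hprime hp).mp (hprime.dvd_of_dvd_pow hd))
    exact this ▸ h
  haveI := hchar
  haveI : Fact p.Prime := ⟨hp⟩
  have h2 : (2 : K) ≠ 0 := by
    have := (CharP.cast_eq_zero_iff K p 2)
    intro h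
    have : p ∣ 2 := this.mp (by exact_mod_cast h)
    have := Nat.le_of_dvd (by norm_num) this
    omega
  have h4 : (4 : K) ≠ 0 := by
    have : (4 : K) = 2 * 2 := by norm_num
    rw [this]; exact mul_ne_zero h2 h2
  have hone : (1 : K) ≠ -1 := fun h => h2 (by linear_combination h)
  -- Frobenius x ↦ x^q is additive
  have hfrobsub : ∀ a c : K, (a - c) ^ q = a ^ q - c ^ q := by
    intro a c; rw [hq]; exact sub_pow_char_pow a c m
  have hbq1 : b ^ (q + 1) ≠ 0 := pow_ne_zero _ hb
  have hbqm1 : b ^ (q - 1) ≠ 0 := pow_ne_zero _ hb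
  have hsplit : b ^ (q + 1) = b ^ (q - 1) * b ^ 2 := by
    rw [← pow_add]; congr 1; omega
  have hbq : b ^ q = b ^ (q - 1) * b := by
    rw [← pow_succ]; congr 1; omega
  set θ : K := (b ^ (q + 1) - 4) / b ^ (q + 1) with hθdef
  have hθeq : θ * b ^ (q + 1) = b ^ (q + 1) - 4 := by
    rw [hθdef]; field_simp
  clear_value θ
  constructor
  · rintro ⟨x, y, hxy, hxU, hyU, hx, hy⟩
    have hx0 : x ≠ 0 := by rintro rfl; simp [zero_pow, Nat.succ_ne_zero] at hxU
    have hy0 : y ≠ 0 := by rintro rfl; simp [zero_pow, Nat.succ_ne_zero] at hyU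
    have hsum : x + y = -b := by
      have h1 : (x - y) * (x + y + b) = 0 := by linear_combination hx - hy
      rcases mul_eq_zero.mp h1 with h | h
      · exact absurd (sub_eq_zero.mp h) hxy
      · linear_combination h
    have hprod : x * y * b ^ (q - 1) = 1 := by
      have hprod' : x * y = 1 / b ^ (q - 1) := by linear_combination x * hsum - hx
      rw [hprod', one_div, inv_mul_cancel₀ hbqm1]
    set s : K := (x - y) / b with hsdef
    have hs0 : s ≠ 0 := div_ne_zero (sub_ne_zero.mpr hxy) hb
    have hs2 : s ^ 2 = θ := by
      rw [hsdef, div_pow, div_eq_iff (pow_ne_zero 2 hb)]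
      refine mul_left_cancel₀ hbqm1 ?_
      linear_combination b ^ (q - 1) * (x + y - b) * hsum - 4 * hprod - hθeq + (θ - 1) * hsplit
    have hxq : x ^ q = x⁻¹ := by
      have : x * x ^ q = 1 := by rw [← pow_succ']; exact hxU
      field_simp; linear_combination this
    have hyq : y ^ q = y⁻¹ := by
      have : y * y ^ q = 1 := by rw [← pow_succ']; exact hyU
      field_simp; linear_combination this
    have hsq : s ^ q = -s := by
      rw [hsdef, div_pow, hfrobsub, hxq, hyq]
      rw [div_eq_iff (pow_ne_zero _ hb)]
      field_simp
      linear_combination (-(y - x) * x * y) * hbq + (-(y - x) * b) * hprod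
    have hsq1 : s ^ (q - 1) = -1 := by
      have h1 : s ^ (q - 1) * s = -1 * s := by
        rw [← pow_succ]
        have : q - 1 + 1 = q := by omega
        rw [this, hsq]; ring
      exact mul_right_cancel₀ hs0 h1
    calc θ ^ k = (s ^ 2) ^ k := by rw [hs2]
    _ = s ^ (2 * k) := by rw [← pow_mul]
    _ = -1 := by rw [hk2, hsq1]
  · intro hθ
    have hθ0 : θ ≠ 0 := by
      rintro h; rw [h, zero_pow (by omega : k ≠ 0)] at hθ; exact hone (by linear_combination 2 * hθ)
    -- θ is a square in K
    have hsq : IsSquare θ := by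
      have hchar2 : ringChar K ≠ 2 := by rw [ringChar.eq K p]; omega
      rw [FiniteField.isSquare_iff hchar2 hθ0, hcard]
      have hdiv : q ^ 2 / 2 = k * (q + 1) := by
        have h5 : q = 2 * k + 1 := by omega
        have : q ^ 2 = 2 * (k * (q + 1)) + 1 := by rw [h5]; ring
        omega
      rw [hdiv, pow_mul, hθ, Even.neg_one_pow (⟨(q+1)/2, by omega⟩ : Even (q+1))]
    obtain ⟨s, hs⟩ := hsq
    have hs2 : s ^ 2 = θ := by rw [hs]; ring
    have hs0 : s ≠ 0 := by rintro rfl; rw [← hs2] at hθ0; simp at hθ0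
    have hsqm1 : s ^ (q - 1) = -1 := by
      have hsq2 : (s ^ (q - 1)) ^ 2 = 1 := by
        calc (s ^ (q - 1)) ^ 2 = (s ^ 2) ^ (q - 1) := by rw [← pow_mul, ← pow_mul, mul_comm]
        _ = (θ ^ k) ^ 2 := by rw [hs2, ← pow_mul, mul_comm, hk2]
        _ = 1 := by rw [hθ]; ring
      have h1 : (s ^ (q - 1) - 1) * (s ^ (q - 1) + 1) = 0 := by linear_combination hsq2
      rcases mul_eq_zero.mp h1 with h | h
      · exfalso
        have : θ ^ k = 1 := by
          calc θ ^ k = s ^ (2 * k) := by rw [← hs2, pow_mul]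
          _ = 1 := by rw [hk2, sub_eq_zero.mp h]
        rw [this] at hθ; exact hone hθ
      · linear_combination h
    have hsq : s ^ q = -s := by
      have : s ^ q = s ^ (q - 1) * s := by rw [← pow_succ]; congr 1; omega
      rw [this, hsqm1]; ring
    have h2q : (2 : K) ^ q = 2 := by
      have : (2 : K) = 1 + 1 := by norm_num
      rw [this, hq, add_pow_char_pow, one_pow]
    refine ⟨b * (s - 1) / 2, -(b * (s + 1)) / 2, ?_, ?_, ?_, ?_, ?_⟩
    · intro h
      apply hs0
      have hbs : b * s = 0 := by
        have h2' : (2 : K)⁻¹ * 2 = 1 := inv_mul_cancel₀ h2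
        linear_combination h - (b * s) * h2'
      rcases mul_eq_zero.mp hbs with h' | h'
      · exact absurd h' hb
      · exact h'
    · -- x^(q+1) = 1
      rw [pow_succ', div_pow, mul_pow, hfrobsub, one_pow, hsq, h2q]
      rw [div_mul_div_comm]
      rw [div_eq_one_iff_eq (mul_ne_zero h2 h2)]
      have : b ^ q * b = b ^ (q + 1) := (pow_succ b q).symm
      linear_combination (1 - s ^ 2) * this - b ^ (q + 1) * hs2 - hθeq
    · rw [pow_succ', div_pow, neg_pow, mul_pow, hq, add_pow_char_pow, one_pow, ← hq, hsq, h2q]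
      rw [Odd.neg_one_pow hqodd]
      rw [div_mul_div_comm]
      rw [div_eq_one_iff_eq (mul_ne_zero h2 h2)]
      have : b ^ q * b = b ^ (q + 1) := (pow_succ b q).symm
      linear_combination (1 - s ^ 2) * this - b ^ (q + 1) * hs2 - hθeq
    · field_simp
      linear_combination hθeq + b ^ (q + 1) * hs2 - (s ^ 2 - 1) * hsplit
    · field_simp
      linear_combination hθeq + b ^ (q + 1) * hs2 - (s ^ 2 - 1) * hsplit
end

section
/- Let q = p^m with p an odd prime, and let b ∈ F_{q^2}^* with b^(q+1) ≠ 4. Then the quadratic x^2 + b·x + 1/b^(q-1) = 0 has two distinct solutions in F_{q^2}, and either both solutions lie in U_{q+1} or neither does. -/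
/-- Let `q = p^m` with `p` an odd prime, `K` the field with `q^2` elements, and
`b ∈ K^*` with `b^(q+1) ≠ 4`. Then `x^2 + b·x + 1/b^(q-1) = 0` has two distinct
solutions in `K`, and either both solutions lie in `U_{q+1}` or neither does. -/
theorem stmt_2 (p m q : ℕ) (hp : p.Prime) (hodd : Odd p) (hm : 0 < m) (hq : q = p ^ m)
    (K : Type*) [Field K] [Fintype K] (hcard : Fintype.card K = q ^ 2)
    (b : K) (hb : b ≠ 0) (hb4 : b ^ (q + 1) ≠ 4) :
    ∃ x y : K, x ≠ y ∧
      (∀ z : K, z ^ 2 + b * z + 1 / b ^ (q - 1) = 0 ↔ z = x ∨ z = y) ∧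
      (x ^ (q + 1) = 1 ↔ y ^ (q + 1) = 1) := by
  -- basic numerics
  have hq1 : 1 ≤ q := by
    rw [hq]; exact Nat.one_le_pow _ _ hp.pos
  have hqo : Odd q := by rw [hq]; exact hodd.pow
  obtain ⟨k, hk⟩ := hqo
  -- characteristic
  have hχ : ringChar K = p := by
    haveI : CharP K (ringChar K) := ringChar.charP K
    obtain ⟨n, hχp, hcn⟩ := FiniteField.card K (ringChar K)
    rw [hcard, hq, ← pow_mul] at hcn
    have : ringChar K ∣ p ^ (m * 2) := hcn ▸ dvd_pow_self _ n.pos.ne'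
    exact (Nat.prime_dvd_prime_iff_eq hχp hp).mp (hχp.dvd_of_dvd_pow this)
  have hχ2 : ringChar K ≠ 2 := by
    rw [hχ]; intro h; rw [h, Nat.odd_iff] at hodd; omega
  have h2 : (2 : K) ≠ 0 := Ring.two_ne_zero hχ2
  haveI : CharP K p := hχ ▸ ringChar.charP K
  haveI : Fact p.Prime := ⟨hp⟩
  -- Frobenius: x ^ q is a ring hom
  have hfrob : ∀ x : K, x ^ q = iterateFrobenius K p m x := by
    intro x; rw [iterateFrobenius_def, hq]
  -- powers of b
  have hbq2 : b ^ (q * q) = b := by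
    have := FiniteField.pow_card b; rwa [hcard, pow_two] at this
  have hbfull : b ^ ((q - 1) * (q + 1)) = 1 := by
    have h1 := FiniteField.pow_card_sub_one_eq_one b hb
    rw [hcard] at h1
    rw [show (q - 1) * (q + 1) = q ^ 2 - 1 by
      obtain ⟨r, rfl⟩ : ∃ r, q = r + 1 := ⟨q - 1, by omega⟩
      have e1 : (r + 1 - 1) * (r + 1 + 1) = r * (r + 2) := by simp
      have e2 : (r + 1) ^ 2 = r * (r + 2) + 1 := by ring
      rw [e1, e2]; omega]
    exact h1
  set c : K := (b ^ (q - 1))⁻¹ with hc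
  have hbn0 : b ^ (q - 1) ≠ 0 := pow_ne_zero _ hb
  have hc0 : c ≠ 0 := inv_ne_zero hbn0
  have hsplit : b ^ (q + 1) = b ^ 2 * b ^ (q - 1) := by
    rw [← pow_add]; congr 1; omega
  -- discriminant
  set Δ : K := b ^ 2 - 4 * c with hΔdef
  have hΔ0 : Δ ≠ 0 := by
    intro h
    apply hb4
    have hb2 : b ^ 2 = 4 * c := sub_eq_zero.mp h
    rw [hsplit, hb2, mul_assoc, hc, inv_mul_cancel₀ hbn0, mul_one]
  set A : K := b ^ (q + 1) - 4 with hA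
  have hA0 : A ≠ 0 := sub_ne_zero.mpr hb4
  have hΔeq : Δ = A * c := by
    rw [hΔdef, hA, hsplit, sub_mul, hc]
    field_simp
  have hAq : A ^ q = A := by
    rw [hfrob, hA, map_sub, map_ofNat, ← hfrob, ← pow_mul]
    congr 1
    rw [show (q + 1) * q = q * q + q by ring, pow_add, hbq2, ← pow_succ']
  have hAq1 : A ^ (q - 1) = 1 := by
    have : A ^ (q - 1) * A = 1 * A := by
      rw [one_mul, ← pow_succ]
      rw [show q - 1 + 1 = q by omega]
      exact hAq
    exact mul_right_cancel₀ hA0 this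
  -- Δ is a square
  have hN : Fintype.card K / 2 = (q - 1) * ((q + 1) / 2) := by
    rw [hcard, hk]
    have h1 : (2 * k + 1) ^ 2 = 2 * (2 * k * (k + 1)) + 1 := by ring
    rw [h1, Nat.mul_add_div (by norm_num)]
    have h2 : (2 * k + 1 + 1) / 2 = k + 1 := by omega
    rw [h2]
    simp [Nat.mul_assoc]
  have hΔpow : Δ ^ (Fintype.card K / 2) = 1 := by
    rw [hN, hΔeq, mul_pow, pow_mul, hAq1, one_pow, one_mul, hc, inv_pow, ← pow_mul]
    rw [show (q - 1) * ((q - 1) * ((q + 1) / 2)) = (q - 1) * (q + 1) * ((q - 1) / 2) by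
      rw [hk]
      have : 2 * k + 1 - 1 = 2 * k := by omega
      rw [this, show (2 * k + 1 + 1) / 2 = k + 1 by omega, show 2 * k / 2 = k by omega]
      ring]
    rw [pow_mul, hbfull, one_pow, inv_one]
  obtain ⟨s, hs⟩ : IsSquare Δ := (FiniteField.isSquare_iff hχ2 hΔ0).mpr hΔpow
  have hs2 : s ^ 2 = b ^ 2 - 4 * c := by rw [pow_two, ← hs]
  have hs2' : s ^ 2 = b ^ 2 - 4 * (b ^ (q - 1))⁻¹ := by rw [hs2, hc]
  have hs0 : s ≠ 0 := by
    intro h; apply hΔ0; rw [hs, h, mul_zero]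
  -- the two roots
  refine ⟨(s - b) / 2, (-s - b) / 2, ?_, ?_, ?_⟩
  · intro h
    field_simp at h
    apply hs0
    have h' : (2 : K) * s = 0 := by linear_combination h
    exact (mul_eq_zero.mp h').resolve_left h2
  · intro z
    have hone : 1 / b ^ (q - 1) = c := by rw [hc, one_div]
    rw [hone]
    have hfac : z ^ 2 + b * z + c = (z - (s - b) / 2) * (z - (-s - b) / 2) := by
      field_simp
      ring_nf
      linear_combination hs2'
    rw [hfac, mul_eq_zero, sub_eq_zero, sub_eq_zero]
  · have hxy : ((s - b) / 2) * ((-s - b) / 2) = c := by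
      field_simp
      linear_combination (-1 : K) * hs2'
    have hprod : ((s - b) / 2) ^ (q + 1) * ((-s - b) / 2) ^ (q + 1) = 1 := by
      rw [← mul_pow, hxy, hc, inv_pow, ← pow_mul, hbfull, inv_one]
    constructor
    · intro h; rw [h, one_mul] at hprod; exact hprod
    · intro h; rw [h, mul_one] at hprod; exact hprod
end

section
/- Let q = p^m with p an odd prime, and b ∈ F_{q^2}^*. If b^(q+1) = 4, then y = -b/2 lies in U_{q+1} and is the unique solution in U_{q+1} of y^2 + b·y + 1/b^(q-1) = 0. -/
/-- Let `q = p^m` with `p` an odd prime, `K` the field with `q^2` elements, and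
`b ∈ K^*`. If `b^(q+1) = 4`, then `y = -b/2` lies in `U_{q+1}` and is the unique
solution in `U_{q+1}` of `y^2 + b·y + 1/b^(q-1) = 0`. -/
theorem stmt_3 (p m q : ℕ) (hp : p.Prime) (hodd : Odd p) (hm : 0 < m) (hq : q = p ^ m)
    (K : Type*) [Field K] [Fintype K] (hcard : Fintype.card K = q ^ 2)
    (b : K) (hb : b ≠ 0) (hb4 : b ^ (q + 1) = 4) :
    (-b / 2) ^ (q + 1) = 1 ∧
      (-b / 2) ^ 2 + b * (-b / 2) + 1 / b ^ (q - 1) = 0 ∧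
      (∀ y : K, y ^ (q + 1) = 1 → y ^ 2 + b * y + 1 / b ^ (q - 1) = 0 → y = -b / 2) := by
  haveI : Fact p.Prime := ⟨hp⟩
  -- char K = p
  have hcast : ((Fintype.card K : ℕ) : K) = 0 := FiniteField.cast_card_eq_zero K
  rw [hcard, hq] at hcast
  push_cast at hcast
  have hp0 : (p : K) = 0 := by
    rw [← pow_mul] at hcast
    exact pow_eq_zero_iff (by positivity) |>.mp hcast
  have hring : ringChar K = p := CharP.ringChar_of_prime_eq_zero hp hp0
  haveI hchar : CharP K p := hring ▸ ringChar.charP K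
  have hpne2 : p ≠ 2 := by
    have := Nat.odd_iff.mp hodd; omega
  have h2 : (2 : K) ≠ 0 := by
    intro h
    have : (p : ℕ) ∣ 2 := (CharP.cast_eq_zero_iff K p 2).mp (by exact_mod_cast h)
    exact hpne2 ((Nat.prime_dvd_prime_iff_eq hp Nat.prime_two).mp this)
  have h4 : (4 : K) ≠ 0 := by
    have : (4 : K) = 2 * 2 := by norm_num
    rw [this]; exact mul_ne_zero h2 h2
  -- 2^q = 2
  have h2p : (2 : K) ^ p = 2 := by
    have := add_pow_char (R := K) (p := p) (1 : K) 1
    norm_num at this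
    exact this
  have key : ∀ n, (2 : K) ^ (p ^ n) = 2 := by
    intro n
    induction n with
    | zero => simp
    | succ n ih => rw [pow_succ, pow_mul, ih, h2p]
  have h2q : (2 : K) ^ q = 2 := by rw [hq]; exact key m
  have hq1 : 1 ≤ q := by rw [hq]; exact Nat.one_le_pow _ _ hp.pos
  have hq_odd : Odd q := by rw [hq]; exact hodd.pow
  -- first part
  have h2q1 : (2 : K) ^ (q + 1) = 4 := by rw [pow_succ, h2q]; norm_num
  have part1 : (-b / 2) ^ (q + 1) = 1 := by
    rw [div_pow, Even.neg_pow hq_odd.add_one, hb4, h2q1, div_self h4]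
  -- b^(q-1) = 4 / b^2
  have hbq : b ^ (q - 1) = 4 / b ^ 2 := by
    have : b ^ (q - 1) * b ^ 2 = 4 := by
      rw [← pow_add, show q - 1 + 2 = q + 1 from by omega, hb4]
    field_simp
    linear_combination this
  have hinv : 1 / b ^ (q - 1) = b ^ 2 / 4 := by
    rw [hbq]
    rw [one_div_div]
  refine ⟨part1, ?_, ?_⟩
  · rw [hinv]; field_simp; ring
  · intro y _ hy
    rw [hinv] at hy
    field_simp at hy
    have hsq : (2 * y + b) ^ 2 = 0 := by linear_combination hy
    have h0 := pow_eq_zero_iff (n := 2) (by norm_num) |>.mp hsq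
    field_simp
    linear_combination h0
end

section
/- Let q = p^m for any prime p, let k be a positive integer with gcd(k, q+1) = 1, and let F(x) = x^(k(q-1)) on F_{q^2}. Then the equation F(x+1) - F(x) = 0 has exactly q - 2 solutions in F_{q^2}, and its solution set is F_q \ {0, -1}; in particular δ_F(1,0) = q - 2. -/
/-- Let `q = p^m` for any prime `p`, `k > 0` with `gcd(k, q+1) = 1`, `K` the field with
`q^2` elements and `F x = x^(k(q-1))`. Then the equation `F(x+1) - F(x) = 0` has
exactly `q - 2` solutions in `K`, and its solution set is `F_q \ {0, -1}`
(where `F_q = {x : x^q = x}`). -/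
theorem stmt_4 (p m q k : ℕ) (hp : p.Prime) (hm : 0 < m) (hq : q = p ^ m)
    (hk : 0 < k) (hgcd : Nat.gcd k (q + 1) = 1)
    (K : Type*) [Field K] [Fintype K] [DecidableEq K] (hcard : Fintype.card K = q ^ 2) :
    (Finset.univ.filter
        (fun x : K => (x + 1) ^ (k * (q - 1)) - x ^ (k * (q - 1)) = 0)).card = q - 2 ∧
    ∀ x : K, (x + 1) ^ (k * (q - 1)) - x ^ (k * (q - 1)) = 0 ↔
      (x ^ q = x ∧ x ≠ 0 ∧ x ≠ -1) := by
  haveI : Fact p.Prime := ⟨hp⟩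
  have hq2 : 2 ≤ q := by
    rw [hq]; calc 2 ≤ p := hp.two_le
    _ ≤ p ^ m := Nat.le_self_pow hm.ne' p
  set e := k * (q - 1) with he
  have he0 : 0 < e := Nat.mul_pos hk (by omega)
  -- characteristic of K is p
  haveI : CharP K (ringChar K) := ringChar.charP K
  obtain ⟨n, hrp, hcard'⟩ := FiniteField.card K (ringChar K)
  have hpr : ringChar K = p := by
    have hd : ringChar K ∣ p ^ (m * 2) := by
      rw [pow_mul, ← hq, ← hcard, hcard']
      exact dvd_pow_self _ n.pos.ne'
    exact (Nat.prime_dvd_prime_iff_eq hrp hp).1 (hrp.dvd_of_dvd_pow hd)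
  haveI : CharP K p := hpr ▸ ringChar.charP K
  have frob : ∀ a b : K, (a + b) ^ q = a ^ q + b ^ q := by
    intro a b; rw [hq]; exact add_pow_char_pow ..
  have hc : ∀ a : K, a ^ q ^ 2 = a := by
    intro a; rw [← hcard]; exact FiniteField.pow_card a
  have hfac : q ^ 2 = (q + 1) * (q - 1) + 1 := by
    obtain ⟨t, rfl⟩ : ∃ t, q = t + 2 := ⟨q - 2, by omega⟩
    show (t + 2) ^ 2 = (t + 2 + 1) * (t + 1) + 1
    ring
  have hq21 : q ^ 2 - 1 = (q + 1) * (q - 1) := Nat.sub_eq_of_eq_add hfac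
  -- the key multiplicative step
  have key : ∀ y : K, y ≠ 0 → y ^ e = 1 → y ^ (q - 1) = 1 := by
    intro y hy hye
    have h1 : orderOf y ∣ e := orderOf_dvd_of_pow_eq_one hye
    have h2 : y ^ (q ^ 2 - 1) = 1 := by
      have h := hc y
      have h' : y ^ (q ^ 2 - 1) * y = 1 * y := by
        rw [one_mul, ← pow_succ, Nat.sub_add_cancel (Nat.one_le_pow _ _ (by omega))]
        exact hc y
      exact mul_right_cancel₀ hy h'
    have h3 : orderOf y ∣ (q + 1) * (q - 1) := hq21 ▸ orderOf_dvd_of_pow_eq_one h2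
    have h4 : orderOf y ∣ q - 1 := by
      have := Nat.dvd_gcd h1 h3
      rwa [he, Nat.gcd_mul_right, hgcd, one_mul] at this
    exact orderOf_dvd_iff_pow_eq_one.1 h4
  have equiv2 : ∀ x : K, (x ^ q = x ∧ x ≠ 0) ↔ x ^ (q - 1) = 1 := by
    intro x
    constructor
    · rintro ⟨hxq, hx0⟩
      have h' : x ^ (q - 1) * x = 1 * x := by
        rw [one_mul, ← pow_succ, Nat.sub_add_cancel (by omega)]
        exact hxq
      exact mul_right_cancel₀ hx0 h'
    · intro h
      have hx0 : x ≠ 0 := by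
        rintro rfl
        rw [zero_pow (by omega : q - 1 ≠ 0)] at h
        exact zero_ne_one h
      refine ⟨?_, hx0⟩
      calc x ^ q = x ^ (q - 1) * x := by rw [← pow_succ, Nat.sub_add_cancel (by omega)]
      _ = x := by rw [h, one_mul]
  have main : ∀ x : K, (x + 1) ^ e - x ^ e = 0 ↔ (x ^ q = x ∧ x ≠ 0 ∧ x ≠ -1) := by
    intro x
    constructor
    · intro h
      have heq : (x + 1) ^ e = x ^ e := sub_eq_zero.1 h
      have hx0 : x ≠ 0 := by
        rintro rfl
        rw [zero_add, one_pow, zero_pow he0.ne'] at heq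
        exact one_ne_zero heq
      have hx1 : x ≠ -1 := by
        rintro rfl
        rw [neg_add_cancel, zero_pow he0.ne'] at heq
        exact pow_ne_zero e (neg_ne_zero.2 (one_ne_zero (α := K))) heq.symm
      refine ⟨?_, hx0, hx1⟩
      have hx1' : x + 1 ≠ 0 := fun h' => hx1 (by
        have := eq_neg_of_add_eq_zero_left h'; simpa using this)
      set y := (x + 1) * x⁻¹ with hy
      have hy0 : y ≠ 0 := mul_ne_zero hx1' (inv_ne_zero hx0)
      have hye : y ^ e = 1 := by
        rw [hy, mul_pow, heq, ← mul_pow, mul_inv_cancel₀ hx0, one_pow]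
      have hyq1 : y ^ (q - 1) = 1 := key y hy0 hye
      have hyq : y ^ q = y := ((equiv2 y).2 hyq1).1
      have hcross : (x + 1) ^ q * x = (x + 1) * x ^ q := by
        have h1 : (x + 1) ^ q * (x⁻¹) ^ q = (x + 1) * x⁻¹ := by
          rw [← mul_pow, ← hy, hyq]
        rw [inv_pow] at h1
        calc (x + 1) ^ q * x = ((x + 1) ^ q * (x ^ q)⁻¹) * x ^ q * x := by
              rw [mul_assoc ((x + 1) ^ q) (x ^ q)⁻¹ (x ^ q), inv_mul_cancel₀ (pow_ne_zero _ hx0), mul_one]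
          _ = (x + 1) * x⁻¹ * x ^ q * x := by rw [h1]
          _ = (x + 1) * x ^ q := by
              rw [mul_right_comm _ (x ^ q), mul_assoc (x + 1) x⁻¹ x, inv_mul_cancel₀ hx0, mul_one]
      rw [frob, one_pow, add_mul, add_mul, one_mul, one_mul, mul_comm (x ^ q) x] at hcross
      exact (add_left_cancel hcross).symm
    · rintro ⟨hxq, hx0, hx1⟩
      have hx1' : x + 1 ≠ 0 := fun h' => hx1 (by
        have := eq_neg_of_add_eq_zero_left h'; simpa using this)
      have h1 : x ^ (q - 1) = 1 := (equiv2 x).1 ⟨hxq, hx0⟩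
      have hxq1 : (x + 1) ^ q = x + 1 := by rw [frob, one_pow, hxq]
      have h2 : (x + 1) ^ (q - 1) = 1 := (equiv2 (x + 1)).1 ⟨hxq1, hx1'⟩
      rw [he, mul_comm k, pow_mul, pow_mul, h1, h2]
      simp
  refine ⟨?_, main⟩
  -- counting
  obtain ⟨g, hg⟩ := IsCyclic.exists_generator (α := Kˣ)
  have hog : orderOf g = q ^ 2 - 1 := by
    rw [orderOf_eq_card_of_forall_mem_zpowers hg, Nat.card_eq_fintype_card, Fintype.card_units, hcard]
  have hdvd : (q + 1) ∣ q ^ 2 - 1 := ⟨q - 1, hq21⟩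
  have hopow : orderOf (g ^ (q + 1)) = q - 1 := by
    rw [orderOf_pow, hog, Nat.gcd_eq_right hdvd, hq21, Nat.mul_div_cancel_left _ (by omega)]
  have hprim : IsPrimitiveRoot ((g ^ (q + 1) : Kˣ) : K) (q - 1) := by
    have h := IsPrimitiveRoot.orderOf ((g ^ (q + 1) : Kˣ) : K)
    rwa [orderOf_units, hopow] at h
  have hneg : (-1 : K) ∈ Polynomial.nthRootsFinset (q - 1) (1 : K) := by
    rw [Polynomial.mem_nthRootsFinset (by omega : 0 < q - 1)]
    refine (equiv2 (-1)).1 ⟨?_, neg_ne_zero.2 one_ne_zero⟩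
    rcases hp.eq_two_or_odd' with h2 | hodd
    · have : (-1 : K) = 1 := by
        subst h2
        haveI : CharP K 2 := by assumption
        exact CharTwo.neg_eq 1
      rw [this, one_pow]
    · have hqodd : Odd q := hq ▸ hodd.pow
      exact hqodd.neg_one_pow
  have hset : (Finset.univ.filter
      (fun x : K => (x + 1) ^ e - x ^ e = 0)) =
      (Polynomial.nthRootsFinset (q - 1) (1 : K)).erase (-1) := by
    ext x
    rw [Finset.mem_filter, Finset.mem_erase,
      Polynomial.mem_nthRootsFinset (by omega : 0 < q - 1), main x]
    constructor
    · rintro ⟨-, hxq, hx0, hx1⟩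
      exact ⟨hx1, (equiv2 x).1 ⟨hxq, hx0⟩⟩
    · rintro ⟨hx1, hpow⟩
      obtain ⟨hxq, hx0⟩ := (equiv2 x).2 hpow
      exact ⟨Finset.mem_univ x, hxq, hx0, hx1⟩
  rw [hset, Finset.card_erase_of_mem hneg, hprim.card_nthRootsFinset]
  omega
end

section
/- Let q = 2^m and k a positive integer with gcd(k, q+1) = 1, and let F(x) = x^(k(q-1)) on F_{q^2}. Then F is locally-APN: for every b ∈ F_{q^2} \ F_2, the equation F(x+1) + F(x) = b has at most 2 solutions x ∈ F_{q^2}. -/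
/-- Let `q = 2^m`, `k > 0` with `gcd(k, q+1) = 1`, `K` the field with `q^2` elements
and `F x = x^(k(q-1))`. Then `F` is locally-APN: for every `b ∈ K \ F_2 = K \ {0,1}`,
the equation `F(x+1) + F(x) = b` has at most `2` solutions in `K`. -/
theorem stmt_5 (m q k : ℕ) (hm : 0 < m) (hq : q = 2 ^ m)
    (hk : 0 < k) (hgcd : Nat.gcd k (q + 1) = 1)
    (K : Type*) [Field K] [Fintype K] [DecidableEq K] (hcard : Fintype.card K = q ^ 2) :
    ∀ b : K, b ≠ 0 → b ≠ 1 →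
      (Finset.univ.filter
        (fun x : K => (x + 1) ^ (k * (q - 1)) + x ^ (k * (q - 1)) = b)).card ≤ 2 := by
  intro b hb0 hb1
  -- basic numeric facts
  have hq2 : 2 ≤ q := by
    subst hq
    calc 2 = 2 ^ 1 := rfl
    _ ≤ 2 ^ m := Nat.pow_le_pow_right (by norm_num) hm
  -- characteristic 2
  have hchar : ringChar K = 2 := by
    obtain ⟨n, hp, hcd⟩ := FiniteField.card K (ringChar K)
    have h0 : ringChar K ∣ q ^ 2 := by
      rw [← hcard, hcd]
      exact dvd_pow_self _ (by positivity)
    have h1 : ringChar K ∣ q := hp.dvd_of_dvd_pow h0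
    rw [hq] at h1
    have h2 : ringChar K ∣ 2 := hp.dvd_of_dvd_pow h1
    exact (Nat.prime_dvd_prime_iff_eq hp Nat.prime_two).mp h2
  haveI : CharP K 2 := by rw [← hchar]; exact ringChar.charP K
  haveI : Fact (Nat.Prime 2) := ⟨Nat.prime_two⟩
  have h2K : (2 : K) = 0 := by exact_mod_cast CharP.cast_eq_zero K 2
  have hneg : (-1 : K) = 1 := CharTwo.neg_eq 1
  have hfrob : ∀ x y : K, (x + y) ^ q = x ^ q + y ^ q := by
    intro x y
    rw [hq]
    exact add_pow_char_pow x y 2 m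
  -- d and its arithmetic
  set d : ℕ := k * (q - 1) with hd
  have hpowcard : ∀ x : K, x ≠ 0 → x ^ (q ^ 2 - 1) = 1 := by
    intro x hx
    rw [← hcard]; exact FiniteField.pow_card_sub_one_eq_one x hx
  have hqq : (q - 1) * (q + 1) = q ^ 2 - 1 := by
    obtain ⟨a, rfl⟩ : ∃ a, q = a + 2 := ⟨q - 2, by omega⟩
    have e1 : a + 2 - 1 = a + 1 := by omega
    rw [e1]
    exact Nat.eq_sub_of_add_eq (by ring)
  -- s^(q+1) = 1 for s = x^d, x ≠ 0
  have hA : ∀ x : K, x ≠ 0 → (x ^ d) ^ (q + 1) = 1 := by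
    intro x hx
    rw [← pow_mul, hd]
    have : k * (q - 1) * (q + 1) = (q ^ 2 - 1) * k := by rw [← hqq]; ring
    rw [this, pow_mul, hpowcard x hx, one_pow]
  -- inverse exponent for k modulo q+1
  obtain ⟨k', hk'⟩ : ∃ k', k * k' % (q + 1) = 1 :=
    by obtain ⟨m, -, h⟩ := Nat.exists_mul_mod_eq_one_of_coprime hgcd (by omega); exact ⟨m, h⟩
  obtain ⟨c, hc⟩ : ∃ c, k * k' = (q + 1) * c + 1 := by
    refine ⟨k * k' / (q + 1), ?_⟩
    conv_lhs => rw [← Nat.div_add_mod (k * k') (q + 1)]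
    rw [hk']
  -- for s with s^(q+1) = 1 : (s^k')^k = s
  have hinvk : ∀ s : K, s ^ (q + 1) = 1 → (s ^ k') ^ k = s := by
    intro s hs
    rw [← pow_mul, mul_comm k' k, hc, pow_add, pow_mul, hs, one_pow, pow_one, one_mul]
  -- for x ≠ 0 : (x^d)^k' = x^(q-1)
  have hB : ∀ x : K, x ≠ 0 → (x ^ d) ^ k' = x ^ (q - 1) := by
    intro x hx
    rw [← pow_mul, hd]
    have : k * (q - 1) * k' = (q ^ 2 - 1) * c + (q - 1) := by
      rw [← hqq]
      calc k * (q - 1) * k' = (q - 1) * (k * k') := by ring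
      _ = (q - 1) * ((q + 1) * c + 1) := by rw [hc]
      _ = (q - 1) * (q + 1) * c + (q - 1) := by ring
    rw [this, pow_add, pow_mul, hpowcard x hx, one_pow, one_mul]
  -- membership facts
  set S := Finset.univ.filter
      (fun x : K => (x + 1) ^ (k * (q - 1)) + x ^ (k * (q - 1)) = b) with hS
  have hd0 : 0 < d := by
    apply Nat.mul_pos hk; omega
  have hmem : ∀ x ∈ S, (x + 1) ^ d + x ^ d = b ∧ x ≠ 0 ∧ x + 1 ≠ 0 := by
    intro x hx
    rw [hS, Finset.mem_filter] at hx
    have heq : (x + 1) ^ d + x ^ d = b := hx.2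
    refine ⟨heq, ?_, ?_⟩
    · rintro rfl
      rw [zero_add, one_pow, zero_pow hd0.ne', add_zero] at heq
      exact hb1 heq.symm
    · intro h
      rw [h, zero_pow hd0.ne'] at heq
      have hx1 : x = 1 := by linear_combination h + hneg
      rw [hx1, one_pow, zero_add] at heq
      exact hb1 heq.symm
  -- key relation: x * (u + v) = v + 1 with u = (x^d)^k', v = (x^d + b)^k'
  have hkey : ∀ x ∈ S, x * ((x ^ d) ^ k' + (x ^ d + b) ^ k') = (x ^ d + b) ^ k' + 1 := by
    intro x hx
    obtain ⟨heq, hx0, hx1⟩ := hmem x hx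
    have ht : x ^ d + b = (x + 1) ^ d := by linear_combination -heq + (x ^ d) * h2K
    rw [hB x hx0, ht, hB (x + 1) hx1]
    have hxq : x ^ (q - 1) * x = x ^ q := by
      rw [← pow_succ]; congr 1; omega
    have hxq1 : (x + 1) ^ (q - 1) * (x + 1) = x ^ q + 1 := by
      rw [← pow_succ]
      have hq1 : q - 1 + 1 = q := by omega
      rw [hq1, hfrob x 1, one_pow]
    linear_combination hxq - hxq1 + (x * (x + 1) ^ (q - 1) - 1) * h2K
  -- injectivity of x ↦ x^d on S
  have hinj : ∀ x₁ ∈ S, ∀ x₂ ∈ S, x₁ ^ d = x₂ ^ d → x₁ = x₂ := by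
    intro x₁ h1 x₂ h2 hs
    have k1 := hkey x₁ h1
    have k2 := hkey x₂ h2
    rw [hs] at k1
    by_cases hw : (x₂ ^ d) ^ k' + (x₂ ^ d + b) ^ k' = 0
    · exfalso
      rw [hw, mul_zero] at k2
      have hv1 : (x₂ ^ d + b) ^ k' = 1 := by linear_combination -k2 + hneg
      have hu1 : (x₂ ^ d) ^ k' = 1 := by
        rw [hv1] at hw
        linear_combination hw + hneg
      obtain ⟨heq, hx0, hx1⟩ := hmem x₂ h2
      have ht : x₂ ^ d + b = (x₂ + 1) ^ d := by
        linear_combination -heq + (x₂ ^ d) * h2K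
      have hs1 : x₂ ^ d = 1 := by
        rw [← hinvk (x₂ ^ d) (hA x₂ hx0), hu1, one_pow]
      have ht1 : x₂ ^ d + b = 1 := by
        rw [← hinvk (x₂ ^ d + b) (by rw [ht]; exact hA _ hx1), hv1, one_pow]
      rw [hs1] at ht1
      apply hb0
      linear_combination ht1
    · exact mul_right_cancel₀ hw (k1.trans k2.symm)
  -- the quadratic
  have hroot : ∀ x ∈ S, b ^ q * (x ^ d) ^ 2 + b ^ (q + 1) * x ^ d + b = 0 := by
    intro x hx
    obtain ⟨heq, hx0, hx1⟩ := hmem x hx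
    set s := x ^ d with hsdef
    have ht : s + b = (x + 1) ^ d := by linear_combination -heq + s * h2K
    have hs1 : s ^ q * s = 1 := by
      have := hA x hx0; rwa [pow_succ] at this
    have ht1 : (s ^ q + b ^ q) * (s + b) = 1 := by
      have h := hA (x + 1) hx1
      rw [← ht] at h
      rw [pow_succ, hfrob s b] at h
      exact h
    have hbq1 : b ^ (q + 1) = b ^ q * b := pow_succ b q
    rw [hbq1]
    linear_combination s * ht1 - (s + b) * hs1
  -- count roots of the quadratic
  set T := Finset.univ.filter
      (fun s : K => b ^ q * s ^ 2 + b ^ (q + 1) * s + b = 0) with hT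
  have hTcard : T.card ≤ 2 := by
    classical
    set p : Polynomial K := Polynomial.C (b ^ q) * Polynomial.X ^ 2 +
        Polynomial.C (b ^ (q + 1)) * Polynomial.X ^ 1 + Polynomial.C b with hp
    have hcoef : p.coeff 2 = b ^ q := by
      simp only [hp, Polynomial.coeff_add, Polynomial.coeff_C_mul, Polynomial.coeff_X_pow,
        Polynomial.coeff_C]
      norm_num
    have hpne : p ≠ 0 := by
      intro h
      rw [h, Polynomial.coeff_zero] at hcoef
      exact pow_ne_zero q hb0 hcoef.symm
    have hdeg : p.natDegree ≤ 2 := by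
      apply Polynomial.natDegree_add_le_of_degree_le
      · apply Polynomial.natDegree_add_le_of_degree_le
        · exact (Polynomial.natDegree_C_mul_le _ _).trans (by simp)
        · exact (Polynomial.natDegree_C_mul_le _ _).trans (by simp)
      · simp
    have hsub : T ⊆ p.roots.toFinset := by
      intro s hs
      rw [hT, Finset.mem_filter] at hs
      rw [Multiset.mem_toFinset, Polynomial.mem_roots hpne]
      simp only [Polynomial.IsRoot, hp, Polynomial.eval_add, Polynomial.eval_mul,
        Polynomial.eval_C, Polynomial.eval_pow, Polynomial.eval_X, pow_one]
      exact hs.2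
    calc T.card ≤ p.roots.toFinset.card := Finset.card_le_card hsub
    _ ≤ Multiset.card p.roots := p.roots.toFinset_card_le
    _ ≤ p.natDegree := p.card_roots'
    _ ≤ 2 := hdeg
  refine le_trans ?_ hTcard
  apply Finset.card_le_card_of_injOn (fun x => x ^ d)
  · intro x hx
    rw [hT, Finset.mem_coe, Finset.mem_filter]
    exact ⟨Finset.mem_univ _, hroot x hx⟩
  · intro x₁ h1 x₂ h2 h
    exact hinj x₁ h1 x₂ h2 h
end

section
/- Let q = 2^m with m even and k a positive integer with gcd(k, q+1) = 1, and let F(x) = x^(k(q-1)) on F_{q^2}. Then the equation F(x+1) + F(x) = 1 has exactly 2 solutions in F_{q^2}, namely x = 0 and x = 1. -/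
/-- Let `q = 2^m` with `m` even, `k > 0` with `gcd(k, q+1) = 1`, `K` the field with
`q^2` elements and `F x = x^(k(q-1))`. Then the equation `F(x+1) + F(x) = 1` has
exactly `2` solutions in `K`, namely `x = 0` and `x = 1`. -/
theorem stmt_6 (m q k : ℕ) (hm : 0 < m) (hmeven : Even m) (hq : q = 2 ^ m)
    (hk : 0 < k) (hgcd : Nat.gcd k (q + 1) = 1)
    (K : Type*) [Field K] [Fintype K] [DecidableEq K] (hcard : Fintype.card K = q ^ 2) :
    (Finset.univ.filter
        (fun x : K => (x + 1) ^ (k * (q - 1)) + x ^ (k * (q - 1)) = 1)).card = 2 ∧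
    ∀ x : K, (x + 1) ^ (k * (q - 1)) + x ^ (k * (q - 1)) = 1 ↔ (x = 0 ∨ x = 1) := by
  have hq2 : 2 ≤ q := by
    rw [hq]
    calc 2 = 2 ^ 1 := (pow_one 2).symm
    _ ≤ 2 ^ m := Nat.pow_le_pow_right (by norm_num) hm
  -- characteristic 2
  have hchar2 : CharP K 2 := by
    obtain ⟨p, hpc⟩ := CharP.exists K
    haveI := hpc
    have hpprime : p.Prime := CharP.char_is_prime K p
    obtain ⟨n, hp, hn⟩ := FiniteField.card K p
    have hcard2 : Fintype.card K = 2 ^ (2 * m) := by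
      rw [hcard, hq, ← pow_mul, mul_comm]
    have hpdvd : p ∣ 2 ^ (2 * m) := by
      rw [← hcard2, hn]
      exact dvd_pow_self p n.2.ne'
    have hp2 : p = 2 := by
      rcases (Nat.Prime.eq_one_or_self_of_dvd Nat.prime_two p
        (hpprime.dvd_of_dvd_pow hpdvd)).symm with h | h
      · exact h
      · exact absurd h hpprime.ne_one
    rwa [hp2] at hpc
  haveI := hchar2
  haveI : Fact (Nat.Prime 2) := ⟨Nat.prime_two⟩
  have h11 : (1 : K) + 1 = 0 := by
    have := hchar2.cast_eq_zero
    push_cast at this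
    linear_combination this
  have hn_pos : 0 < k * (q - 1) := Nat.mul_pos hk (by omega)
  -- 3 ∣ q - 1
  obtain ⟨t, ht⟩ := hmeven
  have h3 : 3 ∣ q - 1 := by
    have : q % 3 = 1 := by
      rw [hq, ht, ← two_mul, pow_mul]
      have h43 : (2 ^ 2) % 3 = 1 := by norm_num
      calc (2 ^ 2) ^ t % 3 = ((2 ^ 2) % 3) ^ t % 3 := by rw [Nat.pow_mod]
      _ = 1 := by rw [h43, one_pow]; norm_num
    omega
  -- main iff
  have key : ∀ x : K, (x + 1) ^ (k * (q - 1)) + x ^ (k * (q - 1)) = 1 ↔ (x = 0 ∨ x = 1) := by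
    intro x
    constructor
    · intro hx
      by_contra hcon
      push_neg at hcon
      obtain ⟨hx0, hx1⟩ := hcon
      have hx1' : x + 1 ≠ 0 := by
        intro h
        apply hx1
        linear_combination h - h11
      set u : K := x ^ (k * (q - 1)) with hu_def
      -- u^(q+1) = 1
      have hupow : ∀ y : K, y ≠ 0 → (y ^ (k * (q - 1))) ^ (q + 1) = 1 := by
        intro y hy
        rw [← pow_mul]
        have hsq : (q - 1) * (q + 1) = q ^ 2 - 1 := by
          have := Nat.sq_sub_sq q 1
          simp only [one_pow] at this
          rw [mul_comm]
          omega
        have hexp : k * (q - 1) * (q + 1) = (q ^ 2 - 1) * k := by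
          calc k * (q - 1) * (q + 1) = k * ((q - 1) * (q + 1)) := by ring
          _ = (q ^ 2 - 1) * k := by rw [hsq]; ring
        rw [hexp, pow_mul, ← hcard, FiniteField.pow_card_sub_one_eq_one y hy, one_pow]
      have hu1 : u ^ (q + 1) = 1 := hupow x hx0
      have hv1 : ((x + 1) ^ (k * (q - 1))) ^ (q + 1) = 1 := hupow (x + 1) hx1'
      -- v = u + 1
      have hveq : (x + 1) ^ (k * (q - 1)) = u + 1 := by
        linear_combination hx - u * h11
      rw [hveq] at hv1
      -- (u+1)^q = u^q + 1
      have hfrob : (u + 1) ^ q = u ^ q + 1 := by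
        rw [hq]
        rw [add_pow_char_pow u 1 2 m, one_pow]
      -- expand (u+1)^(q+1) = (u^q+1)(u+1)
      have hexp : (u ^ q + 1) * (u + 1) = 1 := by
        calc (u ^ q + 1) * (u + 1) = (u + 1) ^ q * (u + 1) := by rw [hfrob]
        _ = (u + 1) ^ (q + 1) := by rw [pow_succ]
        _ = 1 := hv1
      have huq : u ^ (q + 1) = u ^ q * u := by rw [pow_succ]
      -- derive u^q = u + 1
      have h1 : u ^ q * u + u ^ q + u + 1 = 1 := by linear_combination hexp
      have h2 : u ^ q * u = 1 := by rw [← huq]; exact hu1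
      have h3' : u ^ q + u = 1 := by linear_combination h1 - h2 - h11
      have huq1 : u ^ q = u + 1 := by linear_combination h3' - u * h11
      -- u * (u+1) = 1, u^3 = 1
      have hu2 : u * (u + 1) = 1 := by
        calc u * (u + 1) = u ^ q * u := by rw [huq1]; ring
        _ = 1 := h2
      have hu3 : u ^ 3 = 1 := by
        have hu2' : u ^ 2 = u + 1 := by linear_combination hu2 - u * h11
        calc u ^ 3 = u * u ^ 2 := by ring
        _ = u * (u + 1) := by rw [hu2']
        _ = 1 := hu2
      -- u^q = u since 3 ∣ q - 1
      obtain ⟨s, hs⟩ := h3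
      have huqu : u ^ q = u := by
        have hqe : q = 3 * s + 1 := by omega
        rw [hqe, pow_succ, pow_mul, hu3, one_pow, one_mul]
      rw [huqu] at huq1
      exact one_ne_zero (α := K) (by linear_combination -huq1)
    · intro hx
      rcases hx with rfl | rfl
      · rw [zero_pow hn_pos.ne', zero_add, one_pow, add_zero]
      · rw [h11, zero_pow hn_pos.ne', one_pow, zero_add]
  refine ⟨?_, key⟩
  have hset : (Finset.univ.filter
      (fun x : K => (x + 1) ^ (k * (q - 1)) + x ^ (k * (q - 1)) = 1)) = {0, 1} := by
    ext x
    simp only [Finset.mem_filter, Finset.mem_univ, true_and, Finset.mem_insert,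
      Finset.mem_singleton]
    exact key x
  rw [hset]
  rw [Finset.card_insert_of_notMem (by simp), Finset.card_singleton]
end

section
/- Let q = 2^m with m odd and k a positive integer with gcd(k, q+1) = 1, and let F(x) = x^(k(q-1)) on F_{q^2}. Then the equation F(x+1) + F(x) = 1 has exactly 4 solutions in F_{q^2}, namely 0, 1, w, w^2, where w is a primitive cube root of unity in F_{q^2}. -/
/-- Let `q = 2^m` with `m` odd, `k > 0` with `gcd(k, q+1) = 1`, `K` the field with
`q^2` elements and `F x = x^(k(q-1))`. Then for any primitive cube root of unity
`w ∈ K`, the equation `F(x+1) + F(x) = 1` has exactly `4` solutions in `K`, namely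
`0, 1, w, w^2`. -/
theorem stmt_7 (m q k : ℕ) (hm : 0 < m) (hmodd : Odd m) (hq : q = 2 ^ m)
    (hk : 0 < k) (hgcd : Nat.gcd k (q + 1) = 1)
    (K : Type*) [Field K] [Fintype K] [DecidableEq K] (hcard : Fintype.card K = q ^ 2)
    (w : K) (hw3 : w ^ 3 = 1) (hw1 : w ≠ 1) :
    (Finset.univ.filter
        (fun x : K => (x + 1) ^ (k * (q - 1)) + x ^ (k * (q - 1)) = 1)).card = 4 ∧
    ∀ x : K, (x + 1) ^ (k * (q - 1)) + x ^ (k * (q - 1)) = 1 ↔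
      (x = 0 ∨ x = 1 ∨ x = w ∨ x = w ^ 2) := by
  have hq2 : 2 ≤ q := by
    rw [hq]
    calc 2 = 2 ^ 1 := by norm_num
    _ ≤ 2 ^ m := Nat.pow_le_pow_right (by norm_num) hm
  have hq1 : 1 ≤ q := by omega
  have he0 : 0 < k * (q - 1) := Nat.mul_pos hk (by omega)
  -- characteristic 2
  haveI : CharP K (ringChar K) := ringChar.charP K
  obtain ⟨n, hpprime, hcard'⟩ := FiniteField.card K (ringChar K)
  have hp2 : ringChar K = 2 := by
    have hdvd : ringChar K ∣ q ^ 2 := by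
      rw [← hcard, hcard']
      exact dvd_pow_self _ (by positivity : (0:ℕ) < (n:ℕ)).ne'
    rw [hq, ← pow_mul] at hdvd
    have h2 := hpprime.dvd_of_dvd_pow hdvd
    have h3 := Nat.le_of_dvd (by norm_num) h2
    have h4 := hpprime.two_le
    omega
  haveI : CharP K 2 := hp2 ▸ ringChar.charP K
  haveI : Fact (Nat.Prime 2) := ⟨Nat.prime_two⟩
  have htwo : (2 : K) = 0 := by
    have := CharP.cast_eq_zero K 2
    exact_mod_cast this
  have hfrob : ∀ a b : K, (a + b) ^ q = a ^ q + b ^ q := by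
    intro a b; rw [hq]; exact add_pow_char_pow a b 2 m
  have hunit : ∀ z : K, z ≠ 0 → z ^ (q ^ 2 - 1) = 1 := by
    intro z hz; rw [← hcard]; exact FiniteField.pow_card_sub_one_eq_one z hz
  have hqq : (q - 1) * (q + 1) = q ^ 2 - 1 := by
    rcases Nat.exists_eq_add_of_le hq1 with ⟨r, rfl⟩
    have h1 : (1 + r) ^ 2 = r * (r + 2) + 1 := by ring
    have h2 : 1 + r - 1 = r := by omega
    have h3 : 1 + r + 1 = r + 2 := by omega
    rw [h1, h2, h3]; omega
  -- arithmetic mod 3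
  have h3q : 3 ∣ q + 1 := by
    have : ((q + 1 : ℕ) : ZMod 3) = 0 := by
      rw [hq]; push_cast
      rw [show (2 : ZMod 3) = -1 from by decide, hmodd.neg_one_pow]; ring
    exact (ZMod.natCast_eq_zero_iff _ _).mp this
  have hnk : ¬ 3 ∣ k := by
    intro h
    have : 3 ∣ Nat.gcd k (q + 1) := Nat.dvd_gcd h h3q
    omega
  have hne : ¬ 3 ∣ k * (q - 1) := by
    intro h
    rcases (Nat.Prime.dvd_mul Nat.prime_three).mp h with h | h
    · exact hnk h
    · omega
  have horder : orderOf w = 3 := by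
    have hdvd := orderOf_dvd_of_pow_eq_one hw3
    rcases (Nat.dvd_prime Nat.prime_three).mp hdvd with h | h
    · exact absurd (orderOf_eq_one_iff.mp h) hw1
    · exact h
  -- cube roots of unity
  have hcube : ∀ u : K, u ^ 3 = 1 → u ≠ 1 → u ^ 2 + u + 1 = 0 := by
    intro u h3 h1
    have h : (u - 1) * (u ^ 2 + u + 1) = 0 := by linear_combination h3
    rcases mul_eq_zero.mp h with h | h
    · exact absurd (by linear_combination h) h1
    · exact h
  have hw2 : w ^ 2 + w + 1 = 0 := hcube w hw3 hw1
  have hwroots : ∀ u : K, u ^ 3 = 1 → u ≠ 1 → u = w ∨ u = w ^ 2 := by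
    intro u h3 h1
    have hu2 := hcube u h3 h1
    have h : (u - w) * (u - w ^ 2) = 0 := by
      linear_combination hu2 - u * hw2 + hw3
    rcases mul_eq_zero.mp h with h | h
    · exact Or.inl (by linear_combination h)
    · exact Or.inr (by linear_combination h)
  have hgcd1 : ∀ z : K, z ^ k = 1 → z ^ (q + 1) = 1 → z = 1 := by
    intro z h1 h2
    have d1 := orderOf_dvd_of_pow_eq_one h1
    have d2 := orderOf_dvd_of_pow_eq_one h2
    have := Nat.dvd_gcd d1 d2
    rw [hgcd] at this
    exact orderOf_eq_one_iff.mp (Nat.dvd_one.mp this)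
  -- the main equivalence
  have hiff : ∀ x : K, (x + 1) ^ (k * (q - 1)) + x ^ (k * (q - 1)) = 1 ↔
      (x = 0 ∨ x = 1 ∨ x = w ∨ x = w ^ 2) := by
    intro x
    constructor
    · intro hx
      by_cases hx0 : x = 0
      · exact Or.inl hx0
      by_cases hx1 : x = 1
      · exact Or.inr (Or.inl hx1)
      right; right
      have hx1' : x + 1 ≠ 0 := fun h => hx1 (by linear_combination h - htwo)
      set u : K := x ^ (q - 1) with hu_def
      set v : K := (x + 1) ^ (q - 1) with hv_def
      have hbe : x ^ (k * (q - 1)) = u ^ k := by rw [mul_comm k, pow_mul]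
      have hae : (x + 1) ^ (k * (q - 1)) = v ^ k := by rw [mul_comm k, pow_mul]
      have huq : u ^ (q + 1) = 1 := by
        rw [hu_def, ← pow_mul, hqq]; exact hunit x hx0
      have hvq : v ^ (q + 1) = 1 := by
        rw [hv_def, ← pow_mul, hqq]; exact hunit _ hx1'
      set b : K := u ^ k with hb_def
      set a : K := v ^ k with ha_def
      have hb : a + b = 1 := by rw [← hae, ← hbe]; exact hx
      have hbq1 : b ^ (q + 1) = 1 := by
        rw [hb_def, pow_right_comm, huq, one_pow]
      have haq1 : a ^ (q + 1) = 1 := by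
        rw [ha_def, pow_right_comm, hvq, one_pow]
      have hbq : b ^ q * b = 1 := by rw [← pow_succ]; exact hbq1
      have haq : a ^ q * a = 1 := by rw [← pow_succ]; exact haq1
      have hab : a = b + 1 := by linear_combination hb - b * htwo
      have haqf : a ^ q = b ^ q + 1 := by
        rw [hab]
        have := hfrob b 1
        rwa [one_pow] at this
      have hsum : b ^ q + b = 1 := by
        rw [haqf, hab] at haq
        linear_combination haq - hbq - htwo
      have hbqe : b ^ q = b + 1 := by linear_combination hsum - b * htwo
      rw [hbqe] at hbq
      have hb2 : b ^ 2 + b = 1 := by linear_combination hbq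
      have hb3 : b ^ 3 = 1 := by
        linear_combination (b - 1) * hb2 + (b - 1) * htwo
      have hbne1 : b ≠ 1 := by
        intro h; rw [h] at hb2
        exact one_ne_zero (α := K) (by linear_combination hb2)
      have hu3 : u ^ 3 = 1 := by
        apply hgcd1
        · rw [pow_right_comm]; exact hb3
        · rw [← pow_mul, mul_comm, pow_mul, huq, one_pow]
      have hune : u ≠ 1 := by
        intro h
        apply hbne1
        rw [hb_def, h, one_pow]
      have hu2 : u ^ 2 + u + 1 = 0 := hcube u hu3 hune
      -- v = u ^ 2
      have hvu : v * u = 1 := by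
        apply hgcd1
        · rw [mul_pow]
          show a * b = 1
          rw [hab]
          linear_combination hb2
        · rw [mul_pow, huq, hvq, one_mul]
      have hveq : v = u ^ 2 := by
        linear_combination u ^ 2 * hvu - v * hu3
      -- conclude x = u
      have hxq : x ^ q = u * x := by
        rw [hu_def, ← pow_succ, Nat.sub_add_cancel hq1]
      have hx1q : (x + 1) ^ q = v * (x + 1) := by
        rw [hv_def, ← pow_succ, Nat.sub_add_cancel hq1]
      have hE : u * x + 1 = v * (x + 1) := by
        rw [← hxq, ← hx1q]
        have := hfrob x 1
        rw [one_pow] at this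
        exact this.symm
      rw [hveq] at hE
      have hxu : x = u := by
        linear_combination hE + (x + 1) * hu2 - (u * x + u + 1) * htwo
      rcases hwroots u hu3 hune with h | h
      · exact Or.inl (hxu.trans h)
      · exact Or.inr (hxu.trans h)
    · intro h
      have hkey : ∀ t : K, t ^ 3 = 1 → t ≠ 1 → t ^ 2 + t = 1 := by
        intro t h3 h1
        have := hcube t h3 h1
        linear_combination this - htwo
      have hwe3 : (w ^ (k * (q - 1))) ^ 3 = 1 := by
        rw [pow_right_comm, hw3, one_pow]
      have hwene : w ^ (k * (q - 1)) ≠ 1 := by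
        intro hh
        exact hne (horder ▸ orderOf_dvd_of_pow_eq_one hh)
      have hwt := hkey _ hwe3 hwene
      rcases h with h | h | h | h
      · rw [h, zero_add, one_pow, zero_pow he0.ne', add_zero]
      · rw [h]
        have h110 : (1 : K) + 1 = 0 := by linear_combination htwo
        rw [h110, zero_pow he0.ne', one_pow, zero_add]
      · rw [h]
        have hwp : w + 1 = w ^ 2 := by linear_combination (w + 1) * htwo - hw2
        rw [hwp, pow_right_comm]
        exact hwt
      · rw [h]
        have hwp : w ^ 2 + 1 = w := by linear_combination hw2 - w * htwo
        rw [hwp, pow_right_comm]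
        linear_combination hwt
  constructor
  · have hset : (Finset.univ.filter
        (fun x : K => (x + 1) ^ (k * (q - 1)) + x ^ (k * (q - 1)) = 1)) =
        ({0, 1, w, w ^ 2} : Finset K) := by
      ext x
      simp [hiff x]
    rw [hset]
    have hw0 : w ≠ 0 := by
      intro h; rw [h] at hw3; simp at hw3
    have hw21 : w ^ 2 ≠ 1 := by
      intro h
      apply hw1
      calc w = w ^ 2 * w := by rw [h, one_mul]
      _ = w ^ 3 := (pow_succ w 2).symm
      _ = 1 := hw3
    have hw20 : w ^ 2 ≠ 0 := pow_ne_zero _ hw0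
    have hww : w ≠ w ^ 2 := by
      intro h
      exact hw21 (by linear_combination w * h + hw3)
    rw [Finset.card_insert_of_notMem (by
          simp [zero_ne_one, Ne.symm hw0, Ne.symm hw20]),
        Finset.card_insert_of_notMem (by simp [Ne.symm hw1, Ne.symm hw21]),
        Finset.card_insert_of_notMem (by simp [hww]),
        Finset.card_singleton]
  · exact hiff
end

section
/- Let q = 2^m with m odd and k a positive integer with gcd(k, q+1) = 1, and let F(x) = x^(k(q-1)) on F_{q^2}. Let w ∈ F_{q^2} be a primitive cube root of unity. Then the equations F(x+1) + F(x) = w and F(x+1) + F(x) = w^2 each have no solution in F_{q^2}, i.e., δ_F(1,w) = δ_F(1,w^2) = 0. -/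
/-- Let `q = 2^m` with `m` odd, `k > 0` with `gcd(k, q+1) = 1`, `K` the field with
`q^2` elements and `F x = x^(k(q-1))`. Let `w ∈ K` be a primitive cube root of unity.
Then the equations `F(x+1) + F(x) = w` and `F(x+1) + F(x) = w^2` have no solution,
i.e. `δ_F(1,w) = δ_F(1,w^2) = 0`. -/
theorem stmt_8 (m q k : ℕ) (hm : 0 < m) (hmodd : Odd m) (hq : q = 2 ^ m)
    (hk : 0 < k) (hgcd : Nat.gcd k (q + 1) = 1)
    (K : Type*) [Field K] [Fintype K] [DecidableEq K] (hcard : Fintype.card K = q ^ 2)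
    (w : K) (hw3 : w ^ 3 = 1) (hw1 : w ≠ 1) :
    (∀ x : K, (x + 1) ^ (k * (q - 1)) + x ^ (k * (q - 1)) ≠ w) ∧
    (∀ x : K, (x + 1) ^ (k * (q - 1)) + x ^ (k * (q - 1)) ≠ w ^ 2) := by
  have hq2 : 2 ≤ q := by
    subst hq
    calc 2 = 2 ^ 1 := (pow_one 2).symm
    _ ≤ 2 ^ m := Nat.pow_le_pow_right (by norm_num) hm
  -- characteristic of K is 2
  haveI : CharP K (ringChar K) := ringChar.charP K
  obtain ⟨n, hp, hcard'⟩ := FiniteField.card K (ringChar K)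
  have hr2 : ringChar K = 2 := by
    have hdvd : ringChar K ∣ 2 ^ (m * 2) := by
      rw [hq, ← pow_mul] at hcard
      rw [← hcard, hcard']
      exact dvd_pow_self _ (by positivity)
    have := hp.dvd_of_dvd_pow hdvd
    exact (Nat.prime_dvd_prime_iff_eq hp Nat.prime_two).mp this
  haveI hc2 : CharP K 2 := hr2 ▸ (ringChar.charP K)
  haveI : Fact (Nat.Prime 2) := ⟨Nat.prime_two⟩
  have h2 : (2 : K) = 0 := by
    have := CharP.cast_eq_zero K 2
    push_cast at this
    exact this
  -- Frobenius
  have hfr : ∀ a b : K, (a + b) ^ q = a ^ q + b ^ q := by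
    intro a b
    rw [hq]
    exact add_pow_char_pow a b 2 m
  -- powers
  have hpow : ∀ y : K, y ≠ 0 → y ^ (q ^ 2 - 1) = 1 := by
    intro y hy
    rw [← hcard]
    exact FiniteField.pow_card_sub_one_eq_one y hy
  have harith : (q - 1) * (q + 1) = q ^ 2 - 1 := by
    obtain ⟨a, rfl⟩ : ∃ a, q = a + 2 := ⟨q - 2, by omega⟩
    have h1 : (a + 2) ^ 2 = (a + 1) * (a + 3) + 1 := by ring
    have h2 : a + 2 - 1 = a + 1 := by omega
    have h3 : a + 2 + 1 = a + 3 := by omega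
    rw [h1, h2, h3, Nat.add_sub_cancel]
  have hq1 : q - 1 + 1 = q := by omega
  -- 3 divides q + 1
  have h3div : 3 ∣ q + 1 := by
    have h23 : (2 : ZMod 3) ^ m = 2 := by
      have : (2 : ZMod 3) = -1 := by decide
      rw [this, hmodd.neg_one_pow]
    have : ((q + 1 : ℕ) : ZMod 3) = 0 := by
      push_cast [hq]
      rw [h23]
      decide
    exact (ZMod.natCast_eq_zero_iff _ _).mp this
  -- gcd argument
  have hone : ∀ t : K, t ^ k = 1 → t ^ (q + 1) = 1 → t = 1 := by
    intro t h1 h2'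
    have o1 : orderOf t ∣ k := orderOf_dvd_of_pow_eq_one h1
    have o2 : orderOf t ∣ q + 1 := orderOf_dvd_of_pow_eq_one h2'
    have : orderOf t ∣ 1 := hgcd ▸ Nat.dvd_gcd o1 o2
    exact orderOf_eq_one_iff.mp (Nat.dvd_one.mp this)
  -- key characterization
  have hkey : ∀ y : K, y ≠ 0 → (y ^ (k * (q - 1)) = 1 ↔ y ^ q = y) := by
    intro y hy
    constructor
    · intro h
      have ht : (y ^ (q - 1)) ^ k = 1 := by
        rw [← pow_mul, mul_comm]; exact h
      have ht2 : (y ^ (q - 1)) ^ (q + 1) = 1 := by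
        rw [← pow_mul, harith]; exact hpow y hy
      have h1 := hone _ ht ht2
      calc y ^ q = y ^ (q - 1) * y := by rw [← pow_succ, hq1]
      _ = y := by rw [h1, one_mul]
    · intro h
      have h1 : y ^ (q - 1) * y = 1 * y := by rw [← pow_succ, hq1, h, one_mul]
      have h2' : y ^ (q - 1) = 1 := mul_right_cancel₀ hy h1
      rw [mul_comm, pow_mul, h2', one_pow]
  -- elements in the image lie in μ_{q+1}
  have hU : ∀ y : K, y ≠ 0 → (y ^ (k * (q - 1))) ^ (q + 1) = 1 := by
    intro y hy
    rw [← pow_mul, mul_assoc, harith, mul_comm k, pow_mul, hpow y hy, one_pow]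
  have he0 : k * (q - 1) ≠ 0 := Nat.mul_ne_zero (by omega) (by omega)
  -- main auxiliary statement
  have aux : ∀ b : K, b ^ 3 = 1 → b ≠ 1 →
      ∀ x : K, (x + 1) ^ (k * (q - 1)) + x ^ (k * (q - 1)) ≠ b := by
    intro b hb3 hb1 x hx
    have hb0 : b ≠ 0 := by
      intro h; rw [h] at hb3; simp at hb3
    have hbq : b ^ (q + 1) = 1 := by
      obtain ⟨c, hc⟩ := h3div
      rw [hc, pow_mul, hb3, one_pow]
    have hbb : b ^ 2 + b + 1 = 0 := by
      have hfac : (b + 1) * (b ^ 2 + b + 1) = 0 := by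
        linear_combination hb3 + (b ^ 2 + b + 1) * h2
      rcases mul_eq_zero.mp hfac with h | h
      · exact absurd (by linear_combination h - h2) hb1
      · exact h
    by_cases hx0 : x = 0
    · subst hx0
      rw [zero_pow he0, zero_add, one_pow, add_zero] at hx
      exact hb1 hx.symm
    by_cases hx1 : x + 1 = 0
    · have hx1' : x = 1 := by linear_combination hx1 - h2
      rw [hx1, zero_pow he0, hx1', one_pow, zero_add] at hx
      exact hb1 hx.symm
    set u := (x + 1) ^ (k * (q - 1)) with hu_def
    set v := x ^ (k * (q - 1)) with hv_def
    have hu : u ^ (q + 1) = 1 := hU _ hx1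
    have hv : v ^ (q + 1) = 1 := hU _ hx0
    have hfrob : u ^ q + v ^ q = b ^ q := by
      rw [← hfr, hx]
    have huq : u ^ q * u = 1 := by rw [← pow_succ]; exact hu
    have hvq : v ^ q * v = 1 := by rw [← pow_succ]; exact hv
    have hbq2 : b ^ q * b = 1 := by rw [← pow_succ]; exact hbq
    have huv : u * v = b ^ 2 := by
      linear_combination (-(u * v * b)) * hfrob + v * b * huq + u * b * hvq -
        u * v * hbq2 + b * hx
    have hfac : (u + 1) * (u + b ^ 2) = 0 := by
      linear_combination u * hx - huv + u * hbb
    rcases mul_eq_zero.mp hfac with h | h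
    · -- u = 1
      have hu1 : u = 1 := by linear_combination h - h2
      have hx1q : (x + 1) ^ q = x + 1 := (hkey _ hx1).mp hu1
      have hxq : x ^ q = x := by
        have := hfr x 1
        rw [one_pow, hx1q] at this
        exact add_right_cancel this.symm
      have hv1 : v = 1 := (hkey _ hx0).mpr hxq
      have : b = 0 := by linear_combination -hx + hu1 + hv1 + h2
      exact hb0 this
    · -- u = b^2
      have hv1 : v = 1 := by linear_combination hx - h + hbb - h2
      have hxq : x ^ q = x := (hkey _ hx0).mp hv1
      have hx1q : (x + 1) ^ q = x + 1 := by
        have := hfr x 1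
        rw [one_pow, hxq] at this
        exact this
      have hu1 : u = 1 := (hkey _ hx1).mpr hx1q
      have hb2 : b ^ 2 = 1 := by linear_combination h - hu1 - h2
      have : b = 1 := by linear_combination hb3 - b * hb2
      exact hb1 this
  refine ⟨aux w hw3 hw1, aux (w ^ 2) (by rw [← pow_mul, mul_comm, pow_mul, hw3, one_pow]) ?_⟩
  intro hsq
  exact hw1 (by linear_combination hw3 - w * hsq)
end

section
/- Let q = 2^m with m even and k a positive integer with gcd(k, q+1) = 1, and let F(x) = x^(k(q-1)) on F_{q^2}. Then the boomerang uniformity of F is 2; more precisely, for every b ∈ F_{q^2}^*, the system F(x) + F(y) = b, F(x+1) + F(y+1) = b has either 0 or 2 solutions (x,y) ∈ F_{q^2}^2, and it has exactly 2 solutions for exactly 2^(2m-1) - 2^(m-1) + 1 values of b. -/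
namespace Stmt12

structure Setup (K : Type*) [Field K] [Fintype K] (m q k : ℕ) : Prop where
  hm : 0 < m
  hmeven : Even m
  hq : q = 2 ^ m
  hk : 0 < k
  hgcd : Nat.gcd k (q + 1) = 1
  hcard : Fintype.card K = q ^ 2

variable {K : Type*} [Field K] [Fintype K] {m q k : ℕ}

lemma Setup.q4 (S : Setup K m q k) : 4 ≤ q := by
  obtain ⟨j, hj⟩ := S.hmeven
  have hm := S.hm
  have : 2 ≤ m := by omega
  calc (4:ℕ) = 2^2 := rfl
  _ ≤ 2^m := Nat.pow_le_pow_right (by norm_num) this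
  _ = q := S.hq.symm

lemma Setup.two (S : Setup K m q k) : (2:K) = 0 := by
  have h := FiniteField.cast_card_eq_zero K
  rw [S.hcard, S.hq] at h
  push_cast at h
  have h2 : ((2:K) ^ m) ^ 2 = 0 := by exact_mod_cast h
  have hm := S.hm
  have := pow_eq_zero_iff (n := 2) (by norm_num) |>.mp h2
  exact pow_eq_zero_iff (n := m) (by omega) |>.mp this

lemma Setup.charP (S : Setup K m q k) : CharP K 2 := by
  have h2 : (2:K) = 0 := S.two
  have hd : ringChar K ∣ 2 := by
    have := (ringChar.spec K 2)
    exact this.mp (by exact_mod_cast h2)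
  have h1 : ringChar K ≠ 1 := by
    intro h
    have := ringChar.spec K 1
    rw [h] at this
    simp at this
  rcases (Nat.dvd_prime Nat.prime_two).mp hd with h | h
  · exact absurd h h1
  · exact ringChar.of_eq h

lemma Setup.fact2 (S : Setup K m q k) : Fact (Nat.Prime 2) := ⟨Nat.prime_two⟩

lemma Setup.frob_add (S : Setup K m q k) (x y : K) : (x + y) ^ q = x ^ q + y ^ q := by
  haveI := S.charP
  haveI := S.fact2
  rw [S.hq]; exact add_pow_char_pow x y 2 m

lemma Setup.pow_card' (S : Setup K m q k) (x : K) : x ^ (q ^ 2) = x := by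
  rw [← S.hcard]; exact FiniteField.pow_card x

lemma Setup.pow_sub_one (S : Setup K m q k) {x : K} (hx : x ≠ 0) : x ^ (q ^ 2 - 1) = 1 := by
  rw [← S.hcard]; exact FiniteField.pow_card_sub_one_eq_one x hx

lemma Setup.harith (S : Setup K m q k) : (q - 1) * (q + 1) + 1 = q ^ 2 := by
  have h4 := S.q4
  obtain ⟨r, rfl⟩ := Nat.exists_eq_add_of_le (show 1 ≤ q by omega)
  simp [Nat.add_sub_cancel_left]
  ring

lemma Setup.q2big (S : Setup K m q k) : 16 ≤ q ^ 2 := by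
  have h4 := S.q4
  have : 4 * 4 ≤ q * q := Nat.mul_le_mul h4 h4
  have : q ^ 2 = q * q := sq q
  omega

lemma Setup.harith2 (S : Setup K m q k) : q ^ 2 - 1 = (q + 1) * (q - 1) := by
  have h := S.harith
  rw [Nat.mul_comm (q + 1) (q - 1)]
  omega

lemma Setup.F_mem_U (S : Setup K m q k) {x : K} (hx : x ≠ 0) :
    (x ^ (k * (q - 1))) ^ (q + 1) = 1 := by
  rw [← pow_mul]
  have : k * (q - 1) * (q + 1) = (q ^ 2 - 1) * k := by
    have := S.harith; have := S.q4
    calc k * (q - 1) * (q + 1) = (q - 1) * (q + 1) * k := by ring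
    _ = (q ^ 2 - 1) * k := by congr 1; omega
  rw [this, pow_mul, S.pow_sub_one hx, one_pow]

lemma Setup.kinv (S : Setup K m q k) : ∃ k', ∀ u : K, u ^ (q + 1) = 1 → (u ^ k) ^ k' = u := by
  have h1 : 1 < q + 1 := by have := S.q4; omega
  obtain ⟨k', -, hk'⟩ := Nat.exists_mul_mod_eq_one_of_coprime S.hgcd h1
  refine ⟨k', fun u hu => ?_⟩
  have hdm := Nat.div_add_mod (k * k') (q + 1)
  have h2 : k * k' = (q + 1) * (k * k' / (q + 1)) + 1 := by omega
  rw [← pow_mul, h2, pow_add, pow_mul, hu, one_pow, pow_one, one_mul]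

lemma Setup.powk_inj (S : Setup K m q k) {u v : K} (hu : u ^ (q + 1) = 1)
    (hv : v ^ (q + 1) = 1) (h : u ^ k = v ^ k) : u = v := by
  obtain ⟨k', hk'⟩ := S.kinv
  rw [← hk' u hu, h, hk' v hv]

lemma Setup.cardU (S : Setup K m q k) [DecidableEq K] :
    (Finset.univ.filter (fun x : K => x ^ (q + 1) = 1)).card = q + 1 := by
  have h4 := S.q4
  obtain ⟨g, hg⟩ := IsCyclic.exists_ofOrder_eq_natCard (α := Kˣ)
  have hcardu : Nat.card Kˣ = q ^ 2 - 1 := by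
    rw [Nat.card_eq_fintype_card, Fintype.card_units, S.hcard]
  rw [hcardu] at hg
  have hdvd : (q + 1) ∣ orderOf g := by
    rw [hg, S.harith2]; exact ⟨q - 1, rfl⟩
  have hord : orderOf (g ^ (orderOf g / (q + 1))) = q + 1 :=
    orderOf_pow_orderOf_div (by rw [hg]; have := S.q2big; omega) hdvd
  set ζu := g ^ (orderOf g / (q + 1))
  have hζord : orderOf ((ζu : K)) = q + 1 := by rw [orderOf_units]; exact hord
  have hζ : IsPrimitiveRoot ((ζu : K)) (q + 1) := by
    rw [← hζord]; exact IsPrimitiveRoot.orderOf _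
  have hset : Finset.univ.filter (fun x : K => x ^ (q + 1) = 1)
      = Polynomial.nthRootsFinset (q + 1) (1 : K) := by
    ext x
    simp [Polynomial.mem_nthRootsFinset (show 0 < q + 1 by omega)]
  rw [hset, hζ.card_nthRootsFinset]

lemma Setup.qpos (S : Setup K m q k) : 3 ≤ q - 1 := by have := S.q4; omega

lemma Setup.epos (S : Setup K m q k) : 0 < k * (q - 1) :=
  Nat.mul_pos S.hk (by have := S.q4; omega)

lemma Setup.F_eq (S : Setup K m q k) (x : K) : x ^ (k * (q - 1)) = (x ^ (q - 1)) ^ k := by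
  rw [← pow_mul, Nat.mul_comm]

lemma Setup.F_zero (S : Setup K m q k) : (0 : K) ^ (k * (q - 1)) = 0 :=
  zero_pow (by have := S.epos; omega)

lemma Setup.F_one (S : Setup K m q k) : (1 : K) ^ (k * (q - 1)) = 1 := one_pow _

lemma Setup.frob_eq (S : Setup K m q k) (x : K) (hq1 : 1 ≤ q) : x ^ q = x ^ (q - 1) * x := by
  conv_lhs => rw [show q = (q - 1) + 1 by omega]
  rw [pow_succ]

lemma Setup.subfield_F (S : Setup K m q k) {x : K} (hx : x ^ q = x) (hx0 : x ≠ 0) :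
    x ^ (k * (q - 1)) = 1 := by
  have h4 := S.q4
  have h1 : x ^ (q - 1) * x = x := by rw [← S.frob_eq x (by omega)]; exact hx
  have h2 : x ^ (q - 1) = 1 := by
    apply mul_right_cancel₀ hx0
    rw [h1, one_mul]
  rw [S.F_eq, h2, one_pow]

lemma Setup.u_mem (S : Setup K m q k) {x : K} (hx0 : x ≠ 0) :
    (x ^ (q - 1)) ^ (q + 1) = 1 := by
  rw [← pow_mul]
  have h : (q - 1) * (q + 1) = q ^ 2 - 1 := by have := S.harith; omega
  rw [h]
  exact S.pow_sub_one hx0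

lemma Setup.F_mem_U' (S : Setup K m q k) {x : K} (hx0 : x ≠ 0) :
    (x ^ (k * (q - 1))) ^ (q + 1) = 1 := S.F_mem_U hx0

lemma Setup.powk_one (S : Setup K m q k) {u : K} (hu : u ^ (q + 1) = 1)
    (h : u ^ k = 1) : u = 1 := S.powk_inj hu (by rw [one_pow]) (by rw [h, one_pow])

lemma Setup.U_ne_zero (S : Setup K m q k) {u : K} (hu : u ^ (q + 1) = 1) : u ≠ 0 := by
  intro h; rw [h, zero_pow (by omega)] at hu; exact absurd hu (by simp)

lemma Setup.U_inv (S : Setup K m q k) {u : K} (hu : u ^ (q + 1) = 1) : u ^ q * u = 1 := by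
  rw [← pow_succ]; exact hu

-- no element a with a, a+1 both on the unit circle (uses m even)
lemma Setup.no_omega (S : Setup K m q k) {a : K} (ha : a ^ (q + 1) = 1)
    (hb : (a + 1) ^ (q + 1) = 1) : False := by
  have h4 := S.q4
  have htwo := S.two
  have ha0 : a ≠ 0 := S.U_ne_zero ha
  have ha' : a ^ q * a = 1 := S.U_inv ha
  have hb' : (a ^ q + 1) * (a + 1) = 1 := by
    have := S.U_inv hb
    rwa [S.frob_add a 1, one_pow] at this
  have key : a ^ 2 + a + 1 = 0 := by linear_combination a * hb' - a * ha' - ha'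
  have hcube : a ^ 3 = 1 := by linear_combination (a - 1) * key
  -- 3 divides q - 1 since m is even
  obtain ⟨j, hj⟩ := S.hmeven
  have hq4 : q = 4 ^ j := by
    rw [S.hq, hj, show j + j = 2 * j by omega, pow_mul]; norm_num
  have hmod : q % 3 = 1 := by
    rw [hq4]; clear hj hq4 h4
    induction j with
    | zero => rfl
    | succ n ih => rw [pow_succ]; omega
  set t := (q - 1) / 3 with ht
  have hqt : q + 1 = 3 * t + 2 := by omega
  have hsq : a ^ 2 = 1 := by
    have : a ^ (q + 1) = (a ^ 3) ^ t * a ^ 2 := by rw [hqt, pow_add, pow_mul]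
    rw [hcube, one_pow, one_mul] at this
    rw [← this, ha]
  have : a = 0 := by linear_combination key - hsq - htwo
  exact ha0 this

-- the quadratic satisfied by unit-circle points at distance g
lemma Setup.quad (S : Setup K m q k) {g a : K} (hg : g ≠ 0) (ha : a ^ (q + 1) = 1)
    (hc : (a + g) ^ (q + 1) = 1) : g ^ q * a ^ 2 + g ^ q * g * a + g = 0 := by
  have ha' : a ^ q * a = 1 := S.U_inv ha
  have hc' : (a ^ q + g ^ q) * (a + g) = 1 := by
    have := S.U_inv hc
    rwa [S.frob_add a g] at this
  linear_combination a * hc' - (a + g) * ha'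

lemma Setup.roots_sum (S : Setup K m q k) {g a a2 : K} (hg : g ≠ 0) (hne : a ≠ a2)
    (h1 : g ^ q * a ^ 2 + g ^ q * g * a + g = 0)
    (h2 : g ^ q * a2 ^ 2 + g ^ q * g * a2 + g = 0) : a + a2 = g := by
  have htwo := S.two
  have h3 : g ^ q * ((a - a2) * (a + a2 + g)) = 0 := by linear_combination h1 - h2
  have hgq : g ^ q ≠ 0 := pow_ne_zero _ hg
  have h5 : a + a2 + g = 0 := by
    rcases mul_eq_zero.mp h3 with h | h
    · exact absurd h hgq
    · rcases mul_eq_zero.mp h with h' | h'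
      · exact absurd (sub_eq_zero.mp h') hne
      · exact h'
  linear_combination h5 - g * htwo

lemma Setup.notin_ne (S : Setup K m q k) {x : K} (hx : x ^ q ≠ x) :
    x ≠ 0 ∧ x + 1 ≠ 0 := by
  have htwo := S.two
  constructor
  · intro h; apply hx; rw [h, zero_pow (by have := S.q4; omega)]
  · intro h
    have hx1 : x = 1 := by linear_combination h - htwo
    apply hx; rw [hx1, one_pow]

lemma Setup.uv_ne (S : Setup K m q k) {x : K} (hx : x ^ q ≠ x) :
    x ^ (q - 1) ≠ (x + 1) ^ (q - 1) := by
  have h4 := S.q4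
  obtain ⟨hx0, hx1⟩ := S.notin_ne hx
  intro h
  have e1 : x ^ q = x ^ (q - 1) * x := S.frob_eq x (by omega)
  have e2 : (x + 1) ^ q = (x + 1) ^ (q - 1) * (x + 1) := S.frob_eq (x + 1) (by omega)
  have e3 : (x + 1) ^ q = x ^ q + 1 := by rw [S.frob_add x 1, one_pow]
  have hu1 : x ^ (q - 1) = 1 := by linear_combination e3 - e2 + e1 + x * h + h
  apply hx
  rw [e1, hu1, one_mul]

lemma Setup.param_inj (S : Setup K m q k) {x x' : K} (hx : x ^ q ≠ x) (hx' : x' ^ q ≠ x')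
    (hu : x ^ (q - 1) = x' ^ (q - 1)) (hv : (x + 1) ^ (q - 1) = (x' + 1) ^ (q - 1)) :
    x = x' := by
  have h4 := S.q4
  obtain ⟨hx0, hx1⟩ := S.notin_ne hx
  obtain ⟨hx0', hx1'⟩ := S.notin_ne hx'
  have huv : x ^ (q - 1) ≠ (x + 1) ^ (q - 1) := S.uv_ne hx
  have e1 : x ^ q = x ^ (q - 1) * x := S.frob_eq x (by omega)
  have e2 : (x + 1) ^ q = (x + 1) ^ (q - 1) * (x + 1) := S.frob_eq (x + 1) (by omega)
  have e3 : (x + 1) ^ q = x ^ q + 1 := by rw [S.frob_add x 1, one_pow]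
  have key : x * (x ^ (q - 1) - (x + 1) ^ (q - 1)) = (x + 1) ^ (q - 1) - 1 := by
    linear_combination e2 - e3 - e1
  have e1' : x' ^ q = x' ^ (q - 1) * x' := S.frob_eq x' (by omega)
  have e2' : (x' + 1) ^ q = (x' + 1) ^ (q - 1) * (x' + 1) := S.frob_eq (x' + 1) (by omega)
  have e3' : (x' + 1) ^ q = x' ^ q + 1 := by rw [S.frob_add x' 1, one_pow]
  have key' : x' * (x ^ (q - 1) - (x + 1) ^ (q - 1)) = (x + 1) ^ (q - 1) - 1 := by
    rw [hu, hv]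
    linear_combination e2' - e3' - e1'
  have huv0 : x ^ (q - 1) - (x + 1) ^ (q - 1) ≠ 0 := sub_ne_zero.mpr huv
  exact mul_right_cancel₀ huv0 (key.trans key'.symm)

lemma Setup.param_surj (S : Setup K m q k) {u v : K} (hu : u ^ (q + 1) = 1)
    (hv : v ^ (q + 1) = 1) (hu1 : u ≠ 1) (hv1 : v ≠ 1) (huv : u ≠ v) :
    ∃ x : K, x ^ q ≠ x ∧ x ^ (q - 1) = u ∧ (x + 1) ^ (q - 1) = v := by
  have h4 := S.q4
  have htwo := S.two
  have hu0 : u ≠ 0 := S.U_ne_zero hu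
  have hv0 : v ≠ 0 := S.U_ne_zero hv
  have huq : u ^ q * u = 1 := S.U_inv hu
  have hvq : v ^ q * v = 1 := S.U_inv hv
  have hd : u + v ≠ 0 := by
    intro h; apply huv; linear_combination h - v * htwo
  set x := (v + 1) / (u + v) with hx_def
  have hx0 : x ≠ 0 := by
    rw [hx_def]; intro h
    rcases div_eq_zero_iff.mp h with h' | h'
    · apply hv1; linear_combination h' - htwo
    · exact hd h'
  have hx1sum : x + 1 = (u + 1) / (u + v) := by
    rw [hx_def]; field_simp; linear_combination v * htwo
  have hx10 : x + 1 ≠ 0 := by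
    rw [hx1sum]; intro h
    rcases div_eq_zero_iff.mp h with h' | h'
    · apply hu1; linear_combination h' - htwo
    · exact hd h'
  -- Frobenius computations
  have hdq : u ^ q + v ^ q ≠ 0 := by
    intro h
    have : u * v * (u ^ q + v ^ q) = 0 := by rw [h, mul_zero]
    have h2 : v * (u ^ q * u) + u * (v ^ q * v) = 0 := by linear_combination this
    rw [huq, hvq] at h2
    apply hd; linear_combination h2
  have hfq : x ^ q = u * x := by
    rw [hx_def, div_pow]
    rw [show (v + 1) ^ q = v ^ q + 1 by rw [S.frob_add v 1, one_pow]]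
    rw [show (u + v) ^ q = u ^ q + v ^ q from S.frob_add u v]
    rw [← mul_div_assoc, div_eq_div_iff hdq hd]
    linear_combination (1 - u) * hvq - (v + 1) * huq
  have hfq1 : (x + 1) ^ q = v * (x + 1) := by
    rw [show (x + 1) ^ q = x ^ q + 1 by rw [S.frob_add x 1, one_pow], hfq, hx1sum, hx_def]
    field_simp
    linear_combination u * htwo
  refine ⟨x, ?_, ?_, ?_⟩
  · rw [hfq]; intro h
    apply hu1
    have := mul_right_cancel₀ hx0 (h.trans (one_mul x).symm)
    exact this
  · have := S.frob_eq x (by omega)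
    rw [hfq] at this
    exact (mul_right_cancel₀ hx0 this.symm)
  · have := S.frob_eq (x + 1) (by omega)
    rw [hfq1] at this
    exact (mul_right_cancel₀ hx10 this.symm)

/-- The boomerang system. -/
def Sol (q k : ℕ) {K : Type*} [Field K] (b x y : K) : Prop :=
  x ^ (k * (q - 1)) + y ^ (k * (q - 1)) = b ∧
  (x + 1) ^ (k * (q - 1)) + (y + 1) ^ (k * (q - 1)) = b

lemma Sol.symm {q k : ℕ} {b x y : K} (h : Sol q k b x y) : Sol q k b y x :=
  ⟨by rw [add_comm]; exact h.1, by rw [add_comm]; exact h.2⟩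

lemma Setup.coords (S : Setup K m q k) {x : K} (hx : x ^ q ≠ x) :
    (x ^ (k * (q - 1))) ^ (q + 1) = 1 ∧ ((x + 1) ^ (k * (q - 1))) ^ (q + 1) = 1 ∧
    x ^ (k * (q - 1)) ≠ 1 ∧ (x + 1) ^ (k * (q - 1)) ≠ 1 ∧
    x ^ (k * (q - 1)) ≠ (x + 1) ^ (k * (q - 1)) := by
  have h4 := S.q4
  obtain ⟨hx0, hx1⟩ := S.notin_ne hx
  refine ⟨S.F_mem_U hx0, S.F_mem_U hx1, ?_, ?_, ?_⟩
  · intro h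
    rw [S.F_eq] at h
    have := S.powk_one (S.u_mem hx0) h
    apply hx; rw [S.frob_eq x (by omega), this, one_mul]
  · intro h
    rw [S.F_eq] at h
    have h5 : (x + 1) ^ q = x + 1 := by
      rw [S.frob_eq (x + 1) (by omega), S.powk_one (S.u_mem hx1) h, one_mul]
    have h6 : (x + 1) ^ q = x ^ q + 1 := by rw [S.frob_add x 1, one_pow]
    apply hx; rw [h6] at h5; linear_combination h5
  · intro h
    rw [S.F_eq, S.F_eq] at h
    exact S.uv_ne hx (S.powk_inj (S.u_mem hx0) (S.u_mem hx1) h)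

lemma Setup.F_inj (S : Setup K m q k) {x x' : K} (hx : x ^ q ≠ x) (hx' : x' ^ q ≠ x')
    (h1 : x ^ (k * (q - 1)) = x' ^ (k * (q - 1)))
    (h2 : (x + 1) ^ (k * (q - 1)) = (x' + 1) ^ (k * (q - 1))) : x = x' := by
  obtain ⟨hx0, hx1⟩ := S.notin_ne hx
  obtain ⟨hx0', hx1'⟩ := S.notin_ne hx'
  rw [S.F_eq, S.F_eq] at h1 h2
  exact S.param_inj hx hx' (S.powk_inj (S.u_mem hx0) (S.u_mem hx0') h1)
    (S.powk_inj (S.u_mem hx1) (S.u_mem hx1') h2)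

lemma Setup.F_surj (S : Setup K m q k) {a c : K} (ha : a ^ (q + 1) = 1)
    (hc : c ^ (q + 1) = 1) (ha1 : a ≠ 1) (hc1 : c ≠ 1) (hac : a ≠ c) :
    ∃ x : K, x ^ q ≠ x ∧ x ^ (k * (q - 1)) = a ∧ (x + 1) ^ (k * (q - 1)) = c := by
  obtain ⟨k', hk'⟩ := S.kinv
  set u := a ^ k' with hu_def
  set v := c ^ k' with hv_def
  have hu : u ^ (q + 1) = 1 := by rw [hu_def, ← pow_mul, Nat.mul_comm, pow_mul, ha, one_pow]
  have hv : v ^ (q + 1) = 1 := by rw [hv_def, ← pow_mul, Nat.mul_comm, pow_mul, hc, one_pow]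
  have huk : u ^ k = a := by
    rw [hu_def, ← pow_mul, Nat.mul_comm k' k, pow_mul]; exact hk' a ha
  have hvk : v ^ k = c := by
    rw [hv_def, ← pow_mul, Nat.mul_comm k' k, pow_mul]; exact hk' c hc
  have hu1 : u ≠ 1 := fun h => ha1 (by rw [← huk, h, one_pow])
  have hv1 : v ≠ 1 := fun h => hc1 (by rw [← hvk, h, one_pow])
  have huv : u ≠ v := fun h => hac (by rw [← huk, ← hvk, h])
  obtain ⟨x, hxq, hxu, hxv⟩ := S.param_surj hu hv hu1 hv1 huv
  exact ⟨x, hxq, by rw [S.F_eq, hxu, huk], by rw [S.F_eq, hxv, hvk]⟩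

lemma Setup.mixed_absurd (S : Setup K m q k) {b x y : K} (hb : b ≠ 0)
    (hxf : x ^ q = x) (hyf : y ^ q ≠ y) (h : Sol q k b x y) : False := by
  have h4 := S.q4
  have htwo := S.two
  obtain ⟨h1, h2⟩ := h
  obtain ⟨ha, hc, ha1, hc1, hac⟩ := S.coords hyf
  by_cases hx0 : x = 0
  · -- x = 0 : a = b, 1 + c = b, so c = a + 1
    rw [hx0, S.F_zero, zero_add] at h1
    rw [hx0, zero_add, S.F_one, ] at h2
    -- h1 : y^e = b ; h2 : 1 + (y+1)^e = b
    have hc_eq : (y + 1) ^ (k * (q - 1)) = y ^ (k * (q - 1)) + 1 := by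
      rw [h1]; linear_combination h2 - htwo
    exact S.no_omega ha (by rw [← hc_eq]; exact hc)
  · have hfx : x ^ (k * (q - 1)) = 1 := S.subfield_F hxf hx0
    by_cases hx1 : x + 1 = 0
    · -- x = 1
      rw [hfx] at h1
      rw [hx1, S.F_zero, zero_add] at h2
      have hc_eq : (y + 1) ^ (k * (q - 1)) = y ^ (k * (q - 1)) + 1 := by
        rw [h2]; linear_combination -h1
      exact S.no_omega ha (by rw [← hc_eq]; exact hc)
    · have hxf1 : (x + 1) ^ q = x + 1 := by rw [S.frob_add x 1, one_pow, hxf]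
      have hfx1 : (x + 1) ^ (k * (q - 1)) = 1 := S.subfield_F hxf1 hx1
      rw [hfx] at h1; rw [hfx1] at h2
      exact hac (by linear_combination h1 - h2)

lemma Setup.solspec (S : Setup K m q k) {b x y : K} (hb : b ≠ 0) (h : Sol q k b x y) :
    (b = 1 ∧ ((x = 0 ∧ y = 1) ∨ (x = 1 ∧ y = 0))) ∨
    (∃ a : K, a ^ (q + 1) = 1 ∧ (a + b) ^ (q + 1) = 1 ∧ a ≠ 1 ∧ a + b ≠ 1 ∧
      x ^ q ≠ x ∧ y ^ q ≠ y ∧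
      x ^ (k * (q - 1)) = a ∧ (x + 1) ^ (k * (q - 1)) = a + b ∧
      y ^ (k * (q - 1)) = a + b ∧ (y + 1) ^ (k * (q - 1)) = a) := by
  have h4 := S.q4
  have htwo := S.two
  by_cases hxf : x ^ q = x
  · by_cases hyf : y ^ q = y
    · -- both in the subfield
      left
      obtain ⟨h1, h2⟩ := h
      by_cases hx0 : x = 0
      · by_cases hy0 : y = 0
        · exfalso; apply hb
          rw [hx0, hy0, S.F_zero] at h1; rw [← h1]; ring
        · have hfy : y ^ (k * (q - 1)) = 1 := S.subfield_F hyf hy0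
          rw [hx0, S.F_zero, zero_add, hfy] at h1
          refine ⟨h1.symm, Or.inl ⟨hx0, ?_⟩⟩
          rw [hx0, zero_add, S.F_one, ← h1] at h2
          -- h2 : 1 + (y+1)^e = 1
          have : (y + 1) ^ (k * (q - 1)) = 0 := by linear_combination h2
          have hy1 : y + 1 = 0 := by
            by_contra hne
            exact pow_ne_zero _ hne this
          linear_combination hy1 - htwo
      · have hfx : x ^ (k * (q - 1)) = 1 := S.subfield_F hxf hx0
        by_cases hy0 : y = 0
        · rw [hy0, S.F_zero, add_zero, hfx] at h1
          refine ⟨h1.symm, Or.inr ⟨?_, hy0⟩⟩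
          rw [hy0, zero_add, S.F_one, ← h1] at h2
          have : (x + 1) ^ (k * (q - 1)) = 0 := by linear_combination h2
          have hx1 : x + 1 = 0 := by
            by_contra hne
            exact pow_ne_zero _ hne this
          linear_combination hx1 - htwo
        · exfalso; apply hb
          have hfy : y ^ (k * (q - 1)) = 1 := S.subfield_F hyf hy0
          rw [hfx, hfy] at h1
          linear_combination htwo - h1
    · exact absurd (S.mixed_absurd hb hxf hyf h) (by simp)
  · by_cases hyf : y ^ q = y
    · exact absurd (S.mixed_absurd hb hyf hxf h.symm) (by simp)
    · -- both outside the subfield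
      right
      obtain ⟨h1, h2⟩ := h
      obtain ⟨ha, hc, ha1, hc1, hac⟩ := S.coords hxf
      obtain ⟨ha2, hc2, ha21, hc21, hac2⟩ := S.coords hyf
      set a := x ^ (k * (q - 1)) with ha_def
      set c := (x + 1) ^ (k * (q - 1)) with hc_def
      set a2 := y ^ (k * (q - 1)) with ha2_def
      set c2 := (y + 1) ^ (k * (q - 1)) with hc2_def
      set g := a + c with hg_def
      have hg0 : g ≠ 0 := by
        rw [hg_def]; intro hcon; apply hac; linear_combination hcon - c * htwo
      have hcg : c = a + g := by rw [hg_def]; linear_combination -(a * htwo)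
      have hc2g : c2 = a2 + g := by
        rw [hg_def]; linear_combination h2 - h1 - c * htwo
      have hQ1 : g ^ q * a ^ 2 + g ^ q * g * a + g = 0 :=
        S.quad hg0 ha (by rw [← hcg]; exact hc)
      have hQ2 : g ^ q * a2 ^ 2 + g ^ q * g * a2 + g = 0 :=
        S.quad hg0 ha2 (by rw [← hc2g]; exact hc2)
      have haa2 : a ≠ a2 := by
        intro hcon; apply hb; rw [← h1, hcon]; linear_combination a2 * htwo
      have hsum : a + a2 = g := S.roots_sum hg0 haa2 hQ1 hQ2
      have hgb : g = b := by rw [← h1, ← hsum]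
      refine ⟨a, ha, ?_, ha1, ?_, hxf, hyf, rfl, ?_, ?_, ?_⟩
      · rw [show a + b = c by rw [hcg, hgb]]; exact hc
      · rw [show a + b = c by rw [hcg, hgb]]; exact hc1
      · rw [hcg, hgb]
      · linear_combination hsum + hgb - a * htwo
      · linear_combination hc2g + hsum + (g - a) * htwo

lemma Setup.sol_one (S : Setup K m q k) : Sol q k (1 : K) 0 1 := by
  have htwo := S.two
  constructor
  · rw [S.F_zero, S.F_one, zero_add]
  · rw [zero_add, S.F_one, show (1 : K) + 1 = 0 by linear_combination htwo,
      S.F_zero, add_zero]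

lemma Setup.sol_pair (S : Setup K m q k) {a b : K} (ha : a ^ (q + 1) = 1)
    (hab : (a + b) ^ (q + 1) = 1) (ha1 : a ≠ 1) (hab1 : a + b ≠ 1) (hb : b ≠ 0) :
    ∃ x y : K, Sol q k b x y := by
  have htwo := S.two
  have hne : a ≠ a + b := fun h => hb (by linear_combination -h)
  obtain ⟨x, hxq, hxa, hxc⟩ := S.F_surj ha hab ha1 hab1 hne
  obtain ⟨y, hyq, hya, hyc⟩ := S.F_surj hab ha hab1 ha1 (Ne.symm hne)
  refine ⟨x, y, ?_, ?_⟩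
  · rw [hxa, hya]; linear_combination a * htwo
  · rw [hxc, hyc]; linear_combination a * htwo

lemma Setup.sol_unique (S : Setup K m q k) {b x0 y0 : K} (hb : b ≠ 0)
    (h0 : Sol q k b x0 y0) :
    x0 ≠ y0 ∧ ∀ x y : K, Sol q k b x y → (x = x0 ∧ y = y0) ∨ (x = y0 ∧ y = x0) := by
  have htwo := S.two
  rcases S.solspec hb h0 with ⟨hb1, hcase⟩ |
    ⟨a, ha, hab, ha1, hab1, hx0q, hy0q, e1, e2, e3, e4⟩
  · subst hb1
    constructor
    · rcases hcase with ⟨rfl, rfl⟩ | ⟨rfl, rfl⟩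
      · exact zero_ne_one
      · exact one_ne_zero
    · intro x y hs
      rcases S.solspec hb hs with ⟨_, hcase'⟩ |
        ⟨a', ha', hab', _, _, _, _, _, _, _, _⟩
      · rcases hcase with ⟨hx0, hy0⟩ | ⟨hx0, hy0⟩ <;>
          rcases hcase' with ⟨hx, hy⟩ | ⟨hx, hy⟩
        · exact Or.inl ⟨hx.trans hx0.symm, hy.trans hy0.symm⟩
        · exact Or.inr ⟨hx.trans hy0.symm, hy.trans hx0.symm⟩
        · exact Or.inr ⟨hx.trans hy0.symm, hy.trans hx0.symm⟩
        · exact Or.inl ⟨hx.trans hx0.symm, hy.trans hy0.symm⟩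
      · exact absurd (S.no_omega ha' hab') (by simp)
  · have hbne : a ≠ a + b := fun h => hb (by linear_combination -h)
    constructor
    · intro h
      rw [h] at e1
      exact hbne (e1.symm.trans e3)
    · intro x y hs
      rcases S.solspec hb hs with ⟨hb1, _⟩ |
        ⟨a', ha', hab', ha1', hab1', hxq, hyq, f1, f2, f3, f4⟩
      · exfalso; subst hb1; exact S.no_omega ha hab
      · by_cases hcase : a' = a
        · subst hcase
          exact Or.inl ⟨S.F_inj hxq hx0q (f1.trans e1.symm) (f2.trans e2.symm),
            S.F_inj hyq hy0q (f3.trans e3.symm) (f4.trans e4.symm)⟩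
        · have hQ1 : b ^ q * a ^ 2 + b ^ q * b * a + b = 0 := S.quad hb ha hab
          have hQ2 : b ^ q * a' ^ 2 + b ^ q * b * a' + b = 0 := S.quad hb ha' hab'
          have hsum : a' + a = b := S.roots_sum hb hcase hQ2 hQ1
          have ha'b : a' = a + b := by linear_combination hsum - a * htwo
          have hback : a' + b = a := by linear_combination ha'b + b * htwo
          refine Or.inr ⟨?_, ?_⟩
          · exact S.F_inj hxq hy0q (f1.trans (ha'b.trans e3.symm))
              (f2.trans (hback.trans e4.symm))
          · exact S.F_inj hyq hx0q (f3.trans (hback.trans e1.symm))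
              (f4.trans (ha'b.trans e2.symm))

lemma Setup.filter_card [DecidableEq K] (S : Setup K m q k) {b : K} (hb : b ≠ 0)
    {x0 y0 : K} (h0 : Sol q k b x0 y0) :
    (Finset.univ.filter (fun xy : K × K =>
        xy.1 ^ (k * (q - 1)) + xy.2 ^ (k * (q - 1)) = b ∧
        (xy.1 + 1) ^ (k * (q - 1)) + (xy.2 + 1) ^ (k * (q - 1)) = b)).card = 2 := by
  obtain ⟨hne, huniq⟩ := S.sol_unique hb h0
  have hset : (Finset.univ.filter (fun xy : K × K =>
        xy.1 ^ (k * (q - 1)) + xy.2 ^ (k * (q - 1)) = b ∧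
        (xy.1 + 1) ^ (k * (q - 1)) + (xy.2 + 1) ^ (k * (q - 1)) = b))
      = {(x0, y0), (y0, x0)} := by
    ext ⟨x, y⟩
    simp only [Finset.mem_filter, Finset.mem_univ, true_and, Finset.mem_insert,
      Finset.mem_singleton, Prod.mk.injEq]
    constructor
    · intro hs
      exact huniq x y hs
    · rintro (⟨rfl, rfl⟩ | ⟨rfl, rfl⟩)
      · exact h0
      · exact h0.symm
  rw [hset, Finset.card_insert_of_notMem, Finset.card_singleton]
  intro hmem
  rw [Finset.mem_singleton] at hmem
  exact hne (congrArg Prod.fst hmem)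

lemma Setup.fiber_eq [DecidableEq K] (S : Setup K m q k) {b a1 a2 : K}
    (h1U : a1 ^ (q + 1) = 1) (h2U : a2 ^ (q + 1) = 1) (h11 : a1 ≠ 1) (h21 : a2 ≠ 1)
    (hne : a1 ≠ a2) (hsum : a1 + a2 = b) :
    ((((Finset.univ.filter (fun x : K => x ^ (q + 1) = 1)).erase 1).offDiag).filter
      (fun p : K × K => p.1 + p.2 = b)) = {(a1, a2), (a2, a1)} := by
  have htwo := S.two
  have hb : b ≠ 0 := by
    intro h; apply hne; rw [h] at hsum; linear_combination hsum - a2 * htwo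
  have ha2b : a2 = a1 + b := by linear_combination hsum - a1 * htwo
  ext ⟨c1, c2⟩
  simp only [Finset.mem_filter, Finset.mem_offDiag, Finset.mem_erase, Finset.mem_univ,
    true_and, Finset.mem_insert, Finset.mem_singleton, Prod.mk.injEq]
  constructor
  · rintro ⟨⟨⟨hc11, hc1U⟩, ⟨hc21, hc2U⟩, hcne⟩, hcsum⟩
    have hc2b : c2 = c1 + b := by linear_combination hcsum - c1 * htwo
    have Qc : b ^ q * c1 ^ 2 + b ^ q * b * c1 + b = 0 :=
      S.quad hb hc1U (by rw [← hc2b]; exact hc2U)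
    have Qa : b ^ q * a1 ^ 2 + b ^ q * b * a1 + b = 0 :=
      S.quad hb h1U (by rw [← ha2b]; exact h2U)
    by_cases h : c1 = a1
    · exact Or.inl ⟨h, by rw [hc2b, h, ← ha2b]⟩
    · have hs : c1 + a1 = b := S.roots_sum hb h Qc Qa
      have hca : c1 = a2 := by linear_combination hs - hsum
      exact Or.inr ⟨hca, by linear_combination hc2b + hca + hsum + (b - a1) * htwo⟩
  · rintro (⟨rfl, rfl⟩ | ⟨rfl, rfl⟩)
    · exact ⟨⟨⟨h11, h1U⟩, ⟨h21, h2U⟩, hne⟩, hsum⟩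
    · exact ⟨⟨⟨h21, h2U⟩, ⟨h11, h1U⟩, Ne.symm hne⟩, by rw [add_comm]; exact hsum⟩

lemma Setup.count [DecidableEq K] (S : Setup K m q k) :
    2 * ((((Finset.univ.filter (fun x : K => x ^ (q + 1) = 1)).erase 1).offDiag).image
      (fun p : K × K => p.1 + p.2)).card = q * q - q := by
  have htwo := S.two
  have hUcard : (Finset.univ.filter (fun x : K => x ^ (q + 1) = 1)).card = q + 1 := S.cardU
  have h1mem : (1 : K) ∈ Finset.univ.filter (fun x : K => x ^ (q + 1) = 1) :=
    Finset.mem_filter.mpr ⟨Finset.mem_univ _, one_pow _⟩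
  have hEcard : ((Finset.univ.filter (fun x : K => x ^ (q + 1) = 1)).erase 1).card = q := by
    rw [Finset.card_erase_of_mem h1mem, hUcard]; omega
  have hGcard : (((Finset.univ.filter (fun x : K => x ^ (q + 1) = 1)).erase 1).offDiag).card
      = q * q - q := by
    rw [Finset.offDiag_card, hEcard]
  rw [← hGcard]
  rw [Finset.card_eq_sum_card_image (fun p : K × K => p.1 + p.2)
    (((Finset.univ.filter (fun x : K => x ^ (q + 1) = 1)).erase 1).offDiag)]
  rw [Finset.sum_congr rfl (fun b hbmem => ?_), Finset.sum_const, smul_eq_mul, Nat.mul_comm]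
  obtain ⟨⟨a1, a2⟩, hmem, hsum⟩ := Finset.mem_image.mp hbmem
  obtain ⟨hm1, hm2, hmne⟩ := Finset.mem_offDiag.mp hmem
  obtain ⟨h11, h1U'⟩ := Finset.mem_erase.mp hm1
  obtain ⟨h21, h2U'⟩ := Finset.mem_erase.mp hm2
  have h1U := (Finset.mem_filter.mp h1U').2
  have h2U := (Finset.mem_filter.mp h2U').2
  rw [S.fiber_eq h1U h2U h11 h21 hmne hsum]
  rw [Finset.card_insert_of_notMem, Finset.card_singleton]
  intro hc
  rw [Finset.mem_singleton] at hc
  exact hmne (congrArg Prod.fst hc)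

end Stmt12

/-- Let `q = 2^m` with `m` even, `k > 0` with `gcd(k, q+1) = 1`, `K` the field with
`q^2` elements and `F x = x^(k(q-1))`. Then the boomerang uniformity of `F` is `2`:
for every `b ≠ 0` the system `F(x)+F(y) = b`, `F(x+1)+F(y+1) = b` has either `0` or
`2` solutions `(x,y)`, and exactly `2` solutions for exactly
`2^(2m-1) - 2^(m-1) + 1` values of `b`. -/
theorem stmt_12 (m q k : ℕ) (hm : 0 < m) (hmeven : Even m) (hq : q = 2 ^ m)
    (hk : 0 < k) (hgcd : Nat.gcd k (q + 1) = 1)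
    (K : Type*) [Field K] [Fintype K] [DecidableEq K] (hcard : Fintype.card K = q ^ 2)
    (β : K → ℕ)
    (hβ : ∀ b : K, β b = (Finset.univ.filter (fun xy : K × K =>
        xy.1 ^ (k * (q - 1)) + xy.2 ^ (k * (q - 1)) = b ∧
        (xy.1 + 1) ^ (k * (q - 1)) + (xy.2 + 1) ^ (k * (q - 1)) = b)).card) :
    (∀ b : K, b ≠ 0 → β b = 0 ∨ β b = 2) ∧
    (Finset.univ.filter (fun b : K => b ≠ 0 ∧ β b = 2)).card
      = 2 ^ (2 * m - 1) - 2 ^ (m - 1) + 1 := by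
  have S : Stmt12.Setup K m q k := ⟨hm, hmeven, hq, hk, hgcd, hcard⟩
  have htwo := S.two
  have part1 : ∀ b : K, b ≠ 0 → β b = 0 ∨ β b = 2 := by
    intro b hb
    rw [hβ b]
    by_cases hex : ∃ x y : K, Stmt12.Sol q k b x y
    · obtain ⟨x, y, hs⟩ := hex
      exact Or.inr (S.filter_card hb hs)
    · left
      rw [Finset.card_eq_zero, Finset.filter_eq_empty_iff]
      rintro ⟨x, y⟩ _ hs
      exact hex ⟨x, y, hs⟩
  refine ⟨part1, ?_⟩
  have hE : Finset.univ.filter (fun b : K => b ≠ 0 ∧ β b = 2)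
      = insert (1 : K)
        ((((Finset.univ.filter (fun x : K => x ^ (q + 1) = 1)).erase 1).offDiag).image
          (fun p : K × K => p.1 + p.2)) := by
    ext b
    simp only [Finset.mem_filter, Finset.mem_univ, true_and, Finset.mem_insert]
    constructor
    · rintro ⟨hb0, hb2⟩
      rw [hβ b] at hb2
      have hpos : 0 < (Finset.univ.filter (fun xy : K × K =>
          xy.1 ^ (k * (q - 1)) + xy.2 ^ (k * (q - 1)) = b ∧
          (xy.1 + 1) ^ (k * (q - 1)) + (xy.2 + 1) ^ (k * (q - 1)) = b)).card := by
        rw [hb2]; norm_num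
      obtain ⟨⟨x, y⟩, hmem⟩ := Finset.card_pos.mp hpos
      have hs : Stmt12.Sol q k b x y := (Finset.mem_filter.mp hmem).2
      rcases S.solspec hb0 hs with ⟨hb1, _⟩ | ⟨a, ha, hab, ha1, hab1, _, _, _, _, _, _⟩
      · exact Or.inl hb1
      · refine Or.inr (Finset.mem_image.mpr ⟨(a, a + b), ?_, by linear_combination a * htwo⟩)
        rw [Finset.mem_offDiag]
        refine ⟨Finset.mem_erase.mpr ⟨ha1, Finset.mem_filter.mpr ⟨Finset.mem_univ _, ha⟩⟩,
          Finset.mem_erase.mpr ⟨hab1, Finset.mem_filter.mpr ⟨Finset.mem_univ _, hab⟩⟩, ?_⟩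
        intro h
        exact hb0 (by linear_combination -h)
    · rintro (hb1 | hbimg)
      · subst hb1
        exact ⟨one_ne_zero, by rw [hβ]; exact S.filter_card one_ne_zero S.sol_one⟩
      · obtain ⟨⟨a1, a2⟩, hmem, hsum⟩ := Finset.mem_image.mp hbimg
        obtain ⟨hm1, hm2, hmne⟩ := Finset.mem_offDiag.mp hmem
        obtain ⟨h11, h1U'⟩ := Finset.mem_erase.mp hm1
        obtain ⟨h21, h2U'⟩ := Finset.mem_erase.mp hm2
        have h1U := (Finset.mem_filter.mp h1U').2
        have h2U := (Finset.mem_filter.mp h2U').2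
        have hb0 : b ≠ 0 := by
          intro h
          apply hmne
          rw [h] at hsum
          linear_combination hsum - a2 * htwo
        have ha2b : a1 + b = a2 := by linear_combination -hsum + a1 * htwo
        obtain ⟨x, y, hs⟩ := S.sol_pair h1U (by rw [ha2b]; exact h2U) h11
          (by rw [ha2b]; exact h21) hb0
        exact ⟨hb0, by rw [hβ]; exact S.filter_card hb0 hs⟩
  rw [hE, Finset.card_insert_of_notMem]
  · have hcount := S.count
    have e1 : 2 ^ (2 * m - 1) * 2 = 2 ^ (2 * m) := by
      rw [← pow_succ]; congr 1; omega
    have e2 : 2 ^ (m - 1) * 2 = 2 ^ m := by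
      rw [← pow_succ]; congr 1; omega
    have e3 : q * q = 2 ^ (2 * m) := by
      rw [hq, ← pow_add]; congr 1; omega
    have e4 : 2 ^ m ≤ 2 ^ (2 * m) := Nat.pow_le_pow_right (by norm_num) (by omega)
    have e5 : 2 ^ (m - 1) ≤ 2 ^ (2 * m - 1) := Nat.pow_le_pow_right (by norm_num) (by omega)
    rw [e3] at hcount
    have hq' : q = 2 ^ m := hq
    omega
  · intro hmem
    obtain ⟨⟨a1, a2⟩, hmem', hsum⟩ := Finset.mem_image.mp hmem
    obtain ⟨hm1, hm2, hmne⟩ := Finset.mem_offDiag.mp hmem'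
    obtain ⟨h11, h1U'⟩ := Finset.mem_erase.mp hm1
    obtain ⟨h21, h2U'⟩ := Finset.mem_erase.mp hm2
    have h1U := (Finset.mem_filter.mp h1U').2
    have h2U := (Finset.mem_filter.mp h2U').2
    have h12 : a1 + 1 = a2 := by linear_combination -hsum + a1 * htwo
    exact S.no_omega h1U (by rw [h12]; exact h2U)
end

section
/- Let q = p^m with p an odd prime and k a positive integer with gcd(k, q+1) = 1, and let F(x) = x^(k(q-1)) on F_{q^2}. Then F is locally-APN: for every b ∈ F_{q^2} \ {0, 1, -1}, the equation F(x+1) - F(x) = b has at most 2 solutions x ∈ F_{q^2}. -/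
lemma aux_pow_inj {K : Type*} [Monoid K] {k n : ℕ} (hn : 1 < n) (hg : Nat.gcd k n = 1)
    {y z : K} (hy : y ^ n = 1) (hz : z ^ n = 1) (h : y ^ k = z ^ k) : y = z := by
  obtain ⟨a, -, ha⟩ := Nat.exists_mul_mod_eq_one_of_coprime hg hn
  have key : ∀ w : K, w ^ n = 1 → w ^ (k * a) = w := by
    intro w hw
    conv_rhs => rw [← pow_one w]
    rw [← Nat.div_add_mod (k * a) n, ha, pow_add, pow_mul, hw, one_pow, one_mul]
  calc y = y ^ (k * a) := (key y hy).symm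
    _ = (y ^ k) ^ a := by rw [pow_mul]
    _ = (z ^ k) ^ a := by rw [h]
    _ = z ^ (k * a) := by rw [pow_mul]
    _ = z := key z hz

/-- Let `q = p^m` with `p` an odd prime, `k > 0` with `gcd(k, q+1) = 1`, `K` the field
with `q^2` elements and `F x = x^(k(q-1))`. Then `F` is locally-APN: for every
`b ∈ K \ {0, 1, -1}`, the equation `F(x+1) - F(x) = b` has at most `2` solutions. -/
theorem stmt_14 (p m q k : ℕ) (hp : p.Prime) (hodd : Odd p) (hm : 0 < m) (hq : q = p ^ m)
    (hk : 0 < k) (hgcd : Nat.gcd k (q + 1) = 1)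
    (K : Type*) [Field K] [Fintype K] [DecidableEq K] (hcard : Fintype.card K = q ^ 2) :
    ∀ b : K, b ≠ 0 → b ≠ 1 → b ≠ -1 →
      (Finset.univ.filter
        (fun x : K => (x + 1) ^ (k * (q - 1)) - x ^ (k * (q - 1)) = b)).card ≤ 2 := by
  intro b hb0 hb1 hbm
  -- basic numerics
  have hp3 : 3 ≤ p := by
    rcases hodd with ⟨t, ht⟩
    have := hp.two_le
    omega
  have hq3 : 3 ≤ q := by
    calc 3 ≤ p := hp3
      _ ≤ p ^ m := Nat.le_self_pow hm.ne' p
      _ = q := hq.symm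
  have hqodd : Odd q := hq ▸ hodd.pow
  set e := k * (q - 1) with hedef
  have he0 : 0 < e := Nat.mul_pos hk (by omega)
  have heeven : Even e := by
    have h1 : Even (q - 1) := by
      rcases hqodd with ⟨t, ht⟩
      exact ⟨t, by omega⟩
    exact h1.mul_left k
  -- characteristic
  have hfp : Fact p.Prime := ⟨hp⟩
  have hchar : CharP K p := by
    have hrc : CharP K (ringChar K) := ringChar.charP K
    have hrp : (ringChar K).Prime := CharP.char_is_prime K (ringChar K)
    have hdvd : p ∣ Fintype.card K := by
      rw [hcard, hq]; exact dvd_pow (dvd_pow_self p hm.ne') two_ne_zero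
    have h2 : p ∣ ringChar K := (prime_dvd_char_iff_dvd_card p).mpr hdvd
    have h3 : ringChar K = p := ((Nat.prime_dvd_prime_iff_eq hp hrp).mp h2).symm
    exact h3 ▸ hrc
  -- Frobenius
  have hfrob : ∀ u v : K, (u + v) ^ q = u ^ q + v ^ q := by
    intro u v
    rw [hq]; exact add_pow_char_pow (R := K) u v p m
  -- unit circle: x ≠ 0 → (x^(q-1))^(q+1) = 1
  have hcirc : ∀ x : K, x ≠ 0 → (x ^ (q - 1)) ^ (q + 1) = 1 := by
    intro x hx
    have h1 : (q - 1) * (q + 1) = q ^ 2 - 1 := by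
      obtain ⟨n, rfl⟩ : ∃ n, q = n + 1 := ⟨q - 1, by omega⟩
      have h2 : (n + 1) ^ 2 = n * (n + 1 + 1) + 1 := by ring
      simp only [Nat.add_sub_cancel]
      omega
    rw [← pow_mul, h1, ← hcard]
    exact FiniteField.pow_card_sub_one_eq_one x hx
  -- solutions avoid 0 and -1
  set S := Finset.univ.filter
      (fun x : K => (x + 1) ^ e - x ^ e = b) with hSdef
  have hmem : ∀ x : K, x ∈ S ↔ (x + 1) ^ e - x ^ e = b := by
    intro x; simp [hSdef]
  have hne : ∀ x ∈ S, x ≠ 0 ∧ x + 1 ≠ 0 := by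
    intro x hx
    rw [hmem] at hx
    constructor
    · rintro rfl
      rw [zero_add, one_pow, zero_pow he0.ne', sub_zero] at hx
      exact hb1 hx.symm
    · intro h0
      have hxm : x = -1 := by linear_combination h0
      rw [h0, zero_pow he0.ne', hxm, heeven.neg_one_pow, zero_sub] at hx
      exact hbm hx.symm
  -- data attached to a solution
  have hq1 : q - 1 + 1 = q := by omega
  have hstruct : ∀ x ∈ S,
      (x ^ (q - 1)) ^ (q + 1) = 1 ∧ ((x + 1) ^ (q - 1)) ^ (q + 1) = 1 ∧
      (x ^ (q - 1)) ^ k = x ^ e ∧ ((x + 1) ^ (q - 1)) ^ k = (x + 1) ^ e ∧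
      x * (x ^ (q - 1) - (x + 1) ^ (q - 1)) = (x + 1) ^ (q - 1) - 1 := by
    intro x hx
    obtain ⟨hx0, hx1⟩ := hne x hx
    refine ⟨hcirc x hx0, hcirc _ hx1, ?_, ?_, ?_⟩
    · rw [← pow_mul, mul_comm]
    · rw [← pow_mul, mul_comm]
    · have e1 : x ^ q = x ^ (q - 1) * x := by
        calc x ^ q = x ^ (q - 1 + 1) := by rw [hq1]
          _ = x ^ (q - 1) * x := pow_succ x (q - 1)
      have e2 : (x + 1) ^ q = (x + 1) ^ (q - 1) * (x + 1) := by
        calc (x + 1) ^ q = (x + 1) ^ (q - 1 + 1) := by rw [hq1]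
          _ = _ := pow_succ (x + 1) (q - 1)
      have e3 : (x + 1) ^ q = x ^ q + 1 := by
        rw [hfrob x 1, one_pow]
      rw [e1] at e3
      rw [e3] at e2
      linear_combination e2
  -- the value v = x^e satisfies the quadratic
  have hquad : ∀ x ∈ S, b ^ q * (x ^ e) ^ 2 + b ^ (q + 1) * x ^ e + b = 0 := by
    intro x hx
    obtain ⟨hy, hz, hyk, hzk, _⟩ := hstruct x hx
    have hv1 : (x ^ e) ^ (q + 1) = 1 := by
      rw [← hyk, ← pow_mul, mul_comm k (q + 1), pow_mul, hy, one_pow]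
    have hu1 : (x ^ e + b) ^ (q + 1) = 1 := by
      have hbx : (x + 1) ^ e = x ^ e + b := by
        have := (hmem x).mp hx
        linear_combination this
      rw [← hbx, ← hzk, ← pow_mul, mul_comm k (q + 1), pow_mul, hz, one_pow]
    have h2 : (x ^ e) ^ q * x ^ e = 1 := by rw [← pow_succ]; exact hv1
    have h1 : ((x ^ e) ^ q + b ^ q) * (x ^ e + b) = 1 := by
      rw [← hfrob, ← pow_succ]; exact hu1
    rw [pow_succ b q]
    linear_combination x ^ e * h1 - (x ^ e + b) * h2
  -- injectivity of x ↦ x^e on S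
  have hinj : ∀ x1 ∈ S, ∀ x2 ∈ S, x1 ^ e = x2 ^ e → x1 = x2 := by
    intro x1 hx1 x2 hx2 hv
    obtain ⟨hy1, hz1, hyk1, hzk1, hl1⟩ := hstruct x1 hx1
    obtain ⟨hy2, hz2, hyk2, hzk2, hl2⟩ := hstruct x2 hx2
    have hn1 : 1 < q + 1 := by omega
    have hyy : x1 ^ (q - 1) = x2 ^ (q - 1) :=
      aux_pow_inj hn1 hgcd hy1 hy2 (by rw [hyk1, hyk2, hv])
    have hzz : (x1 + 1) ^ (q - 1) = (x2 + 1) ^ (q - 1) := by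
      refine aux_pow_inj hn1 hgcd hz1 hz2 ?_
      rw [hzk1, hzk2]
      have e1 := (hmem x1).mp hx1
      have e2 := (hmem x2).mp hx2
      linear_combination e1 - e2 + hv
    have hyz : x1 ^ (q - 1) - (x1 + 1) ^ (q - 1) ≠ 0 := by
      intro h0
      have heq : x1 ^ (q - 1) = (x1 + 1) ^ (q - 1) := by linear_combination h0
      have : x1 ^ e = (x1 + 1) ^ e := by rw [← hyk1, ← hzk1, heq]
      have e1 := (hmem x1).mp hx1
      exact hb0 (by linear_combination -e1 - this)
    have : x1 * (x1 ^ (q - 1) - (x1 + 1) ^ (q - 1))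
        = x2 * (x1 ^ (q - 1) - (x1 + 1) ^ (q - 1)) := by
      linear_combination hl1 - hl2 - x2 * hyy + (x2 + 1) * hzz
    exact mul_right_cancel₀ hyz this
  -- finish via the roots of the quadratic
  classical
  set P : Polynomial K := Polynomial.C (b ^ q) * Polynomial.X ^ 2
      + Polynomial.C (b ^ (q + 1)) * Polynomial.X + Polynomial.C b with hPdef
  have hbq : b ^ q ≠ 0 := pow_ne_zero q hb0
  have hPdeg : P.natDegree = 2 := Polynomial.natDegree_quadratic hbq
  have hPne : P ≠ 0 := by
    intro h
    rw [h, Polynomial.natDegree_zero] at hPdeg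
    exact two_ne_zero hPdeg.symm
  have hTcard : P.roots.toFinset.card ≤ 2 := by
    refine le_trans (Multiset.toFinset_card_le _) ?_
    have := Polynomial.card_roots' P
    omega
  have hmap : ∀ x ∈ S, x ^ e ∈ P.roots.toFinset := by
    intro x hx
    rw [Multiset.mem_toFinset, Polynomial.mem_roots hPne]
    have := hquad x hx
    simpa [hPdef, Polynomial.IsRoot] using this
  calc S.card ≤ P.roots.toFinset.card :=
      Finset.card_le_card_of_injOn (fun x => x ^ e) hmap
        (fun x1 h1 x2 h2 h => hinj x1 h1 x2 h2 h)
    _ ≤ 2 := hTcard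
end

section
/- Let q = p^m with p an odd prime and k a positive integer with gcd(k, q+1) = 1, and let F(x) = x^(k(q-1)) on F_{q^2}. Then δ_F(1,1) = δ_F(1,-1), and this common value equals 3 if q ≡ 2 (mod 3) and equals 1 otherwise. -/
private lemma aux_pow_eq {K : Type*} [Monoid K] {k n : ℕ}
    (h : ∃ a t, k * a = n * t + 1) {α β : K}
    (hα : α ^ n = 1) (hβ : β ^ n = 1) (hk : α ^ k = β ^ k) : α = β := by
  obtain ⟨a, t, hat⟩ := h
  have h1 : α ^ (k * a) = α := by
    rw [hat, pow_add, pow_mul, hα, one_pow, one_mul, pow_one]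
  have h2 : β ^ (k * a) = β := by
    rw [hat, pow_add, pow_mul, hβ, one_pow, one_mul, pow_one]
  rw [← h1, ← h2, pow_mul, pow_mul, hk]

/-- Let `q = p^m` with `p` an odd prime, `k > 0` with `gcd(k, q+1) = 1`, `K` the field
with `q^2` elements and `F x = x^(k(q-1))`. Then `δ_F(1,1) = δ_F(1,-1)`, and this
common value equals `3` if `q ≡ 2 (mod 3)` and `1` otherwise. -/
theorem stmt_15 (p m q k : ℕ) (hp : p.Prime) (hodd : Odd p) (hm : 0 < m) (hq : q = p ^ m)
    (hk : 0 < k) (hgcd : Nat.gcd k (q + 1) = 1)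
    (K : Type*) [Field K] [Fintype K] [DecidableEq K] (hcard : Fintype.card K = q ^ 2)
    (δ : K → ℕ)
    (hδ : ∀ b : K, δ b = (Finset.univ.filter
        (fun x : K => (x + 1) ^ (k * (q - 1)) - x ^ (k * (q - 1)) = b)).card) :
    δ 1 = δ (-1) ∧ δ 1 = (if q % 3 = 2 then 3 else 1) := by
  classical
  -- basic numerics
  have hp2 : p ≠ 2 := by rintro rfl; exact absurd hodd (by decide)
  have hp3 : 3 ≤ p := by have := hp.two_le; omega
  have hq3 : 3 ≤ q := by
    have : p ≤ p ^ m := Nat.le_self_pow hm.ne' p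
    omega
  have hqodd : Odd q := by rw [hq]; exact hodd.pow
  set d := k * (q - 1) with hd
  have hdpos : 0 < d := Nat.mul_pos hk (by omega)
  have hdeven : Even d := (Nat.Odd.sub_odd hqodd odd_one).mul_left k
  -- characteristic
  haveI : Fact p.Prime := ⟨hp⟩
  haveI := ringChar.charP K
  have hrc : ringChar K = p := by
    have hprime : (ringChar K).Prime := CharP.char_is_prime K (ringChar K)
    obtain ⟨n, -, hn⟩ := FiniteField.card K (ringChar K)
    have heq : (ringChar K) ^ (n : ℕ) = p ^ (m * 2) := by
      rw [← hn, hcard, hq, ← pow_mul]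
    have hdvd : ringChar K ∣ p ^ (m * 2) := heq ▸ dvd_pow_self (ringChar K) n.pos.ne'
    exact (Nat.prime_dvd_prime_iff_eq hprime hp).mp (hprime.dvd_of_dvd_pow hdvd)
  haveI hKp : CharP K p := hrc ▸ ringChar.charP K
  have hne1 : (-1 : K) ≠ 1 := by
    intro h
    have h2 : ((2 : ℕ) : K) = 0 := by push_cast; linear_combination -h
    have := (CharP.cast_eq_zero_iff K p 2).mp h2
    have := Nat.le_of_dvd (by norm_num) this
    omega
  -- Frobenius
  have frob : ∀ a b : K, (a + b) ^ q = a ^ q + b ^ q := by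
    intro a b; rw [hq]; exact add_pow_char_pow a b p m
  have frobs : ∀ a b : K, (a - b) ^ q = a ^ q - b ^ q := by
    intro a b; rw [hq]; exact sub_pow_char_pow a b m (p := p)
  -- exponent arithmetic
  have hQ : (q - 1) * (q + 1) = q ^ 2 - 1 := by
    obtain ⟨e, he⟩ := Nat.exists_eq_add_of_le (show 1 ≤ q by omega)
    subst he
    have h1 : (1 + e) ^ 2 = e * (1 + e + 1) + 1 := by ring
    simp only [Nat.add_sub_cancel_left, h1]
    omega
  have hmu : ∀ x : K, x ≠ 0 → (x ^ (q - 1)) ^ (q + 1) = 1 := by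
    intro x hx
    rw [← pow_mul, hQ, ← hcard]
    exact FiniteField.pow_card_sub_one_eq_one x hx
  have hxq : ∀ x : K, x ^ (q - 1) * x = x ^ q := by
    intro x; rw [← pow_succ]; congr 1; omega
  have hdk : ∀ x : K, (x ^ (q - 1)) ^ k = x ^ d := by
    intro x; rw [← pow_mul, hd, mul_comm]
  have hinvk : ∃ a t, k * a = (q + 1) * t + 1 := by
    obtain ⟨a, -, ha⟩ := Nat.exists_mul_mod_eq_one_of_coprime hgcd (by omega)
    refine ⟨a, k * a / (q + 1), ?_⟩
    have := Nat.div_add_mod (k * a) (q + 1)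
    omega
  have hmud : ∀ x : K, x ≠ 0 → (x ^ d) ^ (q + 1) = 1 := by
    intro x hx
    rw [← hdk, ← pow_mul, mul_comm k (q + 1), pow_mul, hmu x hx, one_pow]
  -- `x = -1` never solves `= 1`
  have hM1 : ∀ x : K, (x + 1) ^ d - x ^ d = 1 → x ≠ -1 := by
    intro x hx h
    rw [h] at hx
    rw [neg_add_cancel, zero_pow hdpos.ne', hdeven.neg_one_pow] at hx
    exact hne1 (by linear_combination hx)
  -- the sets
  set S : Finset K := Finset.univ.filter (fun x => (x + 1) ^ d - x ^ d = 1) with hSdef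
  set S' : Finset K := Finset.univ.filter (fun x => (x + 1) ^ d - x ^ d = -1) with hS'def
  set R : Finset K := Finset.univ.filter
      (fun u => u ^ 2 + u + 1 = 0 ∧ u ^ (q + 1) = 1 ∧ u ≠ 1) with hRdef
  -- Part 1: |S| = |S'|
  have part1 : S.card = S'.card := by
    apply Finset.card_bij (fun x _ => -x - 1)
    · intro x hx
      simp only [hSdef, Finset.mem_filter, Finset.mem_univ, true_and] at hx
      simp only [hS'def, Finset.mem_filter, Finset.mem_univ, true_and]
      have e1 : (-x - 1 + 1 : K) = -x := by ring
      have e2 : (-x - 1 : K) = -(x + 1) := by ring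
      rw [e1, e2, hdeven.neg_pow, hdeven.neg_pow]
      linear_combination -hx
    · intro a _ b _ h
      linear_combination -h
    · intro y hy
      simp only [hS'def, Finset.mem_filter, Finset.mem_univ, true_and] at hy
      refine ⟨-y - 1, ?_, by ring⟩
      simp only [hSdef, Finset.mem_filter, Finset.mem_univ, true_and]
      have e1 : (-y - 1 + 1 : K) = -y := by ring
      have e2 : (-y - 1 : K) = -(y + 1) := by ring
      rw [e1, e2, hdeven.neg_pow, hdeven.neg_pow]
      linear_combination -hy
  -- membership lemma
  have Hmem : ∀ x : K, x ≠ 0 → (x + 1) ^ d - x ^ d = 1 →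
      (x ^ d) ^ 2 + x ^ d + 1 = 0 ∧ (x ^ d) ^ (q + 1) = 1 ∧ x ^ d ≠ 1 := by
    intro x hx0 hx
    have hx1 : x + 1 ≠ 0 := fun h => hM1 x hx (by linear_combination h)
    set u := x ^ d with hu
    have hvu : (x + 1) ^ d = u + 1 := by linear_combination hx
    have hu0 : u ≠ 0 := by rw [hu]; exact pow_ne_zero d hx0
    have huq : u ^ (q + 1) = 1 := by rw [hu]; exact hmud x hx0
    have hvq : (u + 1) ^ (q + 1) = 1 := by rw [← hvu]; exact hmud (x + 1) hx1
    have h1 : (u ^ q + 1) * (u + 1) = 1 := by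
      calc (u ^ q + 1) * (u + 1) = (u + 1) ^ q * (u + 1) := by rw [frob, one_pow]
        _ = (u + 1) ^ (q + 1) := (pow_succ _ _).symm
        _ = 1 := hvq
    have h4 : (1 + u) * (u + 1) = u := by
      calc (1 + u) * (u + 1) = (u ^ (q + 1) + u) * (u + 1) := by rw [huq]
        _ = u * ((u ^ q + 1) * (u + 1)) := by rw [pow_succ]; ring
        _ = u := by rw [h1, mul_one]
    refine ⟨by linear_combination h4, huq, ?_⟩
    intro hu1
    have hα1 : x ^ (q - 1) = 1 :=
      aux_pow_eq hinvk (hmu x hx0) (one_pow _) (by rw [hdk, ← hu, hu1, one_pow])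
    have hxqx : x ^ q = x := by rw [← hxq x, hα1, one_mul]
    have hβ1 : (x + 1) ^ (q - 1) = 1 := by
      have h5 : (x + 1) ^ (q - 1) * (x + 1) = x + 1 := by
        rw [hxq (x + 1), frob, hxqx, one_pow]
      exact mul_right_cancel₀ hx1 (h5.trans (one_mul (x + 1)).symm)
    have hv1 : (x + 1) ^ d = 1 := by rw [← hdk, hβ1, one_pow]
    rw [hvu] at hv1
    exact one_ne_zero (α := K) (by linear_combination hv1 - hu1)
  -- the linear relation
  have Hlin : ∀ z : K, ((z + 1) ^ (q - 1) - z ^ (q - 1)) * z = 1 - (z + 1) ^ (q - 1) := by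
    intro z
    have h1 : z ^ (q - 1) * z = z ^ q := hxq z
    have h2 : (z + 1) ^ (q - 1) * (z + 1) = z ^ q + 1 := by rw [hxq (z + 1), frob, one_pow]
    linear_combination h2 - h1
  -- injectivity
  have Hinj : ∀ x y : K, x ≠ 0 → y ≠ 0 → (x + 1) ^ d - x ^ d = 1 →
      (y + 1) ^ d - y ^ d = 1 → x ^ d = y ^ d → x = y := by
    intro x y hx0 hy0 hx hy hxy
    have hx1 : x + 1 ≠ 0 := fun h => hM1 x hx (by linear_combination h)
    have hy1 : y + 1 ≠ 0 := fun h => hM1 y hy (by linear_combination h)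
    have hαeq : x ^ (q - 1) = y ^ (q - 1) :=
      aux_pow_eq hinvk (hmu x hx0) (hmu y hy0) (by rw [hdk, hdk, hxy])
    have hβeq : (x + 1) ^ (q - 1) = (y + 1) ^ (q - 1) := by
      refine aux_pow_eq hinvk (hmu _ hx1) (hmu _ hy1) ?_
      rw [hdk, hdk]
      linear_combination hx - hy + hxy
    have lx : ((x + 1) ^ (q - 1) - x ^ (q - 1)) * x = 1 - (x + 1) ^ (q - 1) := Hlin x
    have ly : ((x + 1) ^ (q - 1) - x ^ (q - 1)) * y = 1 - (x + 1) ^ (q - 1) := by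
      have h := Hlin y
      rw [← hαeq, ← hβeq] at h
      exact h
    by_cases hab : (x + 1) ^ (q - 1) = x ^ (q - 1)
    · exfalso
      rw [hab, sub_self, zero_mul] at lx
      have hb1 : x ^ (q - 1) = 1 := by linear_combination lx
      have hxd1 : x ^ d = 1 := by rw [← hdk, hb1, one_pow]
      exact (Hmem x hx0 hx).2.2 hxd1
    · have hne : (x + 1) ^ (q - 1) - x ^ (q - 1) ≠ 0 := sub_ne_zero.mpr hab
      exact mul_left_cancel₀ hne (lx.trans ly.symm)
  -- surjectivity
  have Hsurj : ∀ u : K, u ^ 2 + u + 1 = 0 → u ^ (q + 1) = 1 → u ≠ 1 →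
      ∃ x : K, x ≠ 0 ∧ (x + 1) ^ d - x ^ d = 1 ∧ x ^ d = u := by
    intro u h1 h2 h3
    have hu0 : u ≠ 0 := by intro h; rw [h] at h1; norm_num at h1
    obtain ⟨a, t, hat⟩ := hinvk
    set α := u ^ a with hαdef
    set v := u + 1 with hvdef
    have hv0 : v ≠ 0 := by
      intro h
      rw [hvdef] at h
      have hum : u = -1 := by linear_combination h
      rw [hum] at h1; norm_num at h1
    have hveq : v = -(u ^ 2) := by rw [hvdef]; linear_combination h1
    have hq1even : Even (q + 1) := hqodd.add_odd odd_one
    have hvq : v ^ (q + 1) = 1 := by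
      rw [hveq, hq1even.neg_pow, ← pow_mul, mul_comm 2 (q + 1), pow_mul, h2, one_pow]
    set β := v ^ a with hβdef
    clear_value α v β
    have hαk : α ^ k = u := by
      rw [hαdef, ← pow_mul, mul_comm a k, hat, pow_add, pow_mul, h2, one_pow, one_mul, pow_one]
    have hβk : β ^ k = v := by
      rw [hβdef, ← pow_mul, mul_comm a k, hat, pow_add, pow_mul, hvq, one_pow, one_mul, pow_one]
    have hαq : α ^ (q + 1) = 1 := by
      rw [hαdef, ← pow_mul, mul_comm a (q + 1), pow_mul, h2, one_pow]
    have hβq : β ^ (q + 1) = 1 := by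
      rw [hβdef, ← pow_mul, mul_comm a (q + 1), pow_mul, hvq, one_pow]
    have hα0 : α ≠ 0 := by rw [hαdef]; exact pow_ne_zero a hu0
    have hβ0 : β ≠ 0 := by rw [hβdef]; exact pow_ne_zero a hv0
    have hαβ : α ≠ β := by
      intro h
      rw [h, hβk] at hαk
      rw [hvdef] at hαk
      exact one_ne_zero (α := K) (by linear_combination hαk)
    have hβα : β - α ≠ 0 := sub_ne_zero.mpr fun h => hαβ h.symm
    have hβ1 : β ≠ 1 := by
      intro h
      rw [h, one_pow] at hβk
      rw [hvdef] at hβk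
      exact hu0 (by linear_combination -hβk)
    have hα1 : α ≠ 1 := by
      intro h
      rw [h, one_pow] at hαk
      exact h3 hαk.symm
    set x := (1 - β) / (β - α) with hxdef
    clear_value x
    have hx0 : x ≠ 0 := by
      rw [hxdef]
      exact div_ne_zero (sub_ne_zero.mpr fun h => hβ1 h.symm) hβα
    have hx1 : x + 1 ≠ 0 := by
      intro h
      apply hα1
      have hxm : (1 - β) / (β - α) = -1 := by rw [← hxdef]; linear_combination h
      rw [div_eq_iff hβα] at hxm
      linear_combination -hxm
    have hαinv : α ^ q = α⁻¹ :=
      eq_inv_of_mul_eq_one_left (by rw [← pow_succ, hαq])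
    have hβinv : β ^ q = β⁻¹ :=
      eq_inv_of_mul_eq_one_left (by rw [← pow_succ, hβq])
    have hii : β⁻¹ - α⁻¹ ≠ 0 := sub_ne_zero.mpr fun h => hαβ (inv_injective h).symm
    have hxq' : x ^ q = α * x := by
      have hstep : x ^ q = (1 - β⁻¹) / (β⁻¹ - α⁻¹) := by
        rw [hxdef, div_pow, frobs 1 β, frobs β α, one_pow, hαinv, hβinv]
      rw [hstep, hxdef, ← mul_div_assoc, div_eq_div_iff hii hβα]
      linear_combination (α - 1) * mul_inv_cancel₀ hβ0 + (1 - β) * mul_inv_cancel₀ hα0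
    have hx' : (β - α) * x = 1 - β := by
      rw [hxdef, mul_comm, div_mul_cancel₀ _ hβα]
    have hxq1 : (x + 1) ^ q = β * (x + 1) := by
      rw [frob, hxq', one_pow]
      linear_combination -hx'
    have hαx : x ^ (q - 1) = α := by
      have h5 := hxq x
      rw [hxq'] at h5
      exact mul_right_cancel₀ hx0 h5
    have hβx : (x + 1) ^ (q - 1) = β := by
      have h5 := hxq (x + 1)
      rw [hxq1] at h5
      exact mul_right_cancel₀ hx1 h5
    have hxd : x ^ d = u := by rw [← hdk, hαx]; exact hαk
    have hx1d : (x + 1) ^ d = v := by rw [← hdk, hβx]; exact hβk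
    refine ⟨x, hx0, ?_, hxd⟩
    rw [hx1d, hxd, hvdef]
    ring
  -- |S| = |R| + 1
  have h0S : (0 : K) ∈ S := by
    simp only [hSdef, Finset.mem_filter, Finset.mem_univ, true_and]
    rw [zero_add, one_pow, zero_pow hdpos.ne', sub_zero]
  have hSR : S.card = R.card + 1 := by
    rw [← Finset.card_erase_add_one h0S]
    congr 1
    apply Finset.card_bij (fun x _ => x ^ d)
    · intro x hx
      rw [Finset.mem_erase] at hx
      obtain ⟨hx0, hxS⟩ := hx
      simp only [hSdef, Finset.mem_filter, Finset.mem_univ, true_and] at hxS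
      simp only [hRdef, Finset.mem_filter, Finset.mem_univ, true_and]
      exact Hmem x hx0 hxS
    · intro x hx y hy h
      rw [Finset.mem_erase] at hx hy
      simp only [hSdef, Finset.mem_filter, Finset.mem_univ, true_and] at hx hy
      exact Hinj x y hx.1 hy.1 hx.2 hy.2 h
    · intro u hu
      simp only [hRdef, Finset.mem_filter, Finset.mem_univ, true_and] at hu
      obtain ⟨x, hx0, hxS, hxd⟩ := Hsurj u hu.1 hu.2.1 hu.2.2
      refine ⟨x, ?_, hxd⟩
      rw [Finset.mem_erase]
      refine ⟨hx0, ?_⟩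
      simp only [hSdef, Finset.mem_filter, Finset.mem_univ, true_and]
      exact hxS
  -- |R|
  have hRcard : R.card = if q % 3 = 2 then 2 else 0 := by
    have h3 : q % 3 = 0 ∨ q % 3 = 1 ∨ q % 3 = 2 := by omega
    rcases h3 with h3 | h3 | h3
    · rw [if_neg (by omega), Finset.card_eq_zero, Finset.eq_empty_iff_forall_notMem]
      intro u hu
      simp only [hRdef, Finset.mem_filter, Finset.mem_univ, true_and] at hu
      obtain ⟨h1, h2, hu1⟩ := hu
      have hp3' : p = 3 := by
        have h3q : (3 : ℕ) ∣ q := Nat.dvd_of_mod_eq_zero h3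
        rw [hq] at h3q
        exact ((Nat.prime_dvd_prime_iff_eq Nat.prime_three hp).mp
          (Nat.Prime.dvd_of_dvd_pow Nat.prime_three h3q)).symm
      have h3K : ((3 : ℕ) : K) = 0 := by
        rw [← hp3']; exact CharP.cast_eq_zero K p
      have h3K' : (3 : K) = 0 := by exact_mod_cast h3K
      have hsq : (u - 1) ^ 2 = 0 := by linear_combination h1 - u * h3K'
      have h5 : u - 1 = 0 := by
        exact pow_eq_zero_iff (two_ne_zero) |>.mp hsq
      exact hu1 (by linear_combination h5)
    · rw [if_neg (by omega), Finset.card_eq_zero, Finset.eq_empty_iff_forall_notMem]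
      intro u hu
      simp only [hRdef, Finset.mem_filter, Finset.mem_univ, true_and] at hu
      obtain ⟨h1, h2, hu1⟩ := hu
      have hu3 : u ^ 3 = 1 := by linear_combination (u - 1) * h1
      have hcop : Nat.Coprime 3 (q + 1) := by
        rw [Nat.Prime.coprime_iff_not_dvd Nat.prime_three]
        omega
      have hex : ∃ a t, 3 * a = (q + 1) * t + 1 := by
        obtain ⟨a, -, ha⟩ := Nat.exists_mul_mod_eq_one_of_coprime hcop (by omega)
        refine ⟨a, 3 * a / (q + 1), ?_⟩
        have := Nat.div_add_mod (3 * a) (q + 1)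
        omega
      exact hu1 (aux_pow_eq hex h2 (one_pow _) (by rw [hu3, one_pow]))
    · rw [if_pos h3]
      have h3dvd : (3 : ℕ) ∣ Fintype.card Kˣ := by
        rw [Fintype.card_units, hcard]
        have hmod : q ^ 2 % 3 = 1 := by
          rw [Nat.pow_mod, h3]
        have : 1 ≤ q ^ 2 := Nat.one_le_pow _ _ (by omega)
        omega
      haveI : Fact (Nat.Prime 3) := ⟨Nat.prime_three⟩
      obtain ⟨g, hg⟩ := exists_prime_orderOf_dvd_card 3 h3dvd
      set ω : K := (g : K) with hω
      have hω3 : ω ^ 3 = 1 := by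
        have h := pow_orderOf_eq_one g
        rw [hg] at h
        rw [hω]
        have h2 := congrArg (Units.val) h
        push_cast at h2
        exact h2
      have hω1 : ω ≠ 1 := by
        intro h
        have hg1 : g = 1 := Units.ext (by rw [Units.val_one, ← hω]; exact h)
        rw [hg1, orderOf_one] at hg
        norm_num at hg
      have hω0 : ω ≠ 0 := by rw [hω]; exact Units.ne_zero g
      have hquad : ω ^ 2 + ω + 1 = 0 := by
        have h2 : (ω - 1) * (ω ^ 2 + ω + 1) = 0 := by linear_combination hω3
        rcases mul_eq_zero.mp h2 with h | h
        · exact absurd (sub_eq_zero.mp h) hω1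
        · exact h
      obtain ⟨s, hs⟩ : (3 : ℕ) ∣ q + 1 := by omega
      have hωq : ω ^ (q + 1) = 1 := by rw [hs, pow_mul, hω3, one_pow]
      have hωne : ω ≠ ω ^ 2 := by
        intro h
        have h5 : ω * 1 = ω * ω := by rw [mul_one, ← pow_two]; exact h
        exact hω1 (mul_left_cancel₀ hω0 h5).symm
      have hω21 : ω ^ 2 ≠ 1 := by
        intro h
        have h3' : ω ^ 3 = ω := by rw [pow_succ, h, one_mul]
        exact hω1 (h3'.symm.trans hω3)
      have hRset : R = {ω, ω ^ 2} := by
        ext u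
        simp only [hRdef, Finset.mem_filter, Finset.mem_univ, true_and,
          Finset.mem_insert, Finset.mem_singleton]
        constructor
        · rintro ⟨h1, h2, hu1⟩
          have hfac : (u - ω) * (u - ω ^ 2) = 0 := by
            linear_combination h1 - u * hquad + hω3
          rcases mul_eq_zero.mp hfac with h | h
          · left; exact sub_eq_zero.mp h
          · right; exact sub_eq_zero.mp h
        · rintro (rfl | rfl)
          · exact ⟨hquad, hωq, hω1⟩
          · refine ⟨by linear_combination hquad + ω * hω3, ?_, hω21⟩
            rw [← pow_mul, mul_comm 2 (q + 1), pow_mul, hωq, one_pow]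
      rw [hRset, Finset.card_insert_of_notMem (by simpa using hωne), Finset.card_singleton]
  -- conclusion
  constructor
  · rw [hδ 1, hδ (-1), ← hSdef, ← hS'def]
    exact part1
  · rw [hδ 1, ← hSdef, hSR, hRcard]
    split_ifs <;> rfl
end
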